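/- arXiv:1203.4809 — 8 statements merged into one kernel-verified Lean document; each statement's English description precedes it below -/
import Mathlib

section
/- Let F be a real orthogonal m×m matrix, A a real m×n matrix with rank(A) = n, and set M = FA. Let M = QR be a thin QR factorization with QᵀQ = Iₙ and R an invertible n×n upper triangular matrix. Let S be a real k×m matrix such that rank(SM) = n, and let SM = Q_s R_s be a thin QR factorization with Q_sᵀQ_s = Iₙ and R_s invertible. Then κ(A R_s⁻¹) = κ(S Q), i.e. (sup_{‖x‖₂=1} ‖A R_s⁻¹ x‖₂) / (inf_{‖x‖₂=1} ‖A R_s⁻¹ x‖₂) = (sup_{‖x‖₂=1} ‖S Q x‖₂) / (inf_{‖x‖₂=1} ‖S Q x‖₂). -/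
open Matrix

/-- The Euclidean two-norm of a vector in `ℝᵖ`. -/
noncomputable def euclNorm {p : ℕ} (v : Fin p → ℝ) : ℝ :=
  Real.sqrt (∑ i, v i ^ 2)

/-- `sup_{‖x‖₂=1} ‖X x‖₂` for a real `p × q` matrix `X`. -/
noncomputable def supOnSphere {p q : ℕ} (X : Matrix (Fin p) (Fin q) ℝ) : ℝ :=
  sSup {r | ∃ x : Fin q → ℝ, euclNorm x = 1 ∧ r = euclNorm (X.mulVec x)}

/-- `inf_{‖x‖₂=1} ‖X x‖₂` for a real `p × q` matrix `X`. -/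
noncomputable def infOnSphere {p q : ℕ} (X : Matrix (Fin p) (Fin q) ℝ) : ℝ :=
  sInf {r | ∃ x : Fin q → ℝ, euclNorm x = 1 ∧ r = euclNorm (X.mulVec x)}

/-- The two-norm condition number
`κ(X) = (sup_{‖x‖₂=1} ‖X x‖₂)/(inf_{‖x‖₂=1} ‖X x‖₂)`. -/
noncomputable def condNum {p q : ℕ} (X : Matrix (Fin p) (Fin q) ℝ) : ℝ :=
  supOnSphere X / infOnSphere X

/-! ### Auxiliary material -/

lemma euclNorm_eq_norm {p : ℕ} (v : Fin p → ℝ) :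
    euclNorm v = ‖(WithLp.equiv 2 (Fin p → ℝ)).symm v‖ := by
  rw [EuclideanSpace.norm_eq]
  simp [euclNorm, Real.norm_eq_abs, sq_abs]

lemma euclNorm_smul {p : ℕ} (c : ℝ) (v : Fin p → ℝ) :
    euclNorm (c • v) = |c| * euclNorm v := by
  rw [euclNorm_eq_norm, euclNorm_eq_norm]
  have : (WithLp.equiv 2 (Fin p → ℝ)).symm (c • v)
      = c • (WithLp.equiv 2 (Fin p → ℝ)).symm v := rfl
  rw [this, norm_smul, Real.norm_eq_abs]

lemma euclNorm_pos {p : ℕ} {v : Fin p → ℝ} (hv : v ≠ 0) : 0 < euclNorm v := by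
  rw [euclNorm_eq_norm]
  rw [norm_pos_iff]
  intro h
  apply hv
  have := congrArg (WithLp.equiv 2 (Fin p → ℝ)) h
  simpa using this

lemma euclNorm_mulVec_orth {p q : ℕ} (U : Matrix (Fin p) (Fin q) ℝ)
    (hU : Uᵀ * U = 1) (y : Fin q → ℝ) : euclNorm (U.mulVec y) = euclNorm y := by
  unfold euclNorm
  congr 1
  have h1 : ∀ w : Fin p → ℝ, ∑ i, w i ^ 2 = w ⬝ᵥ w := by
    intro w; simp [dotProduct, sq]
  have h2 : ∀ w : Fin q → ℝ, ∑ i, w i ^ 2 = w ⬝ᵥ w := by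
    intro w; simp [dotProduct, sq]
  rw [h1, h2, Matrix.dotProduct_mulVec, ← Matrix.mulVec_transpose,
    Matrix.mulVec_mulVec, hU, Matrix.one_mulVec]

/-- The set of values of `‖X x‖` over the unit sphere. -/
def sphereVals {p q : ℕ} (X : Matrix (Fin p) (Fin q) ℝ) : Set ℝ :=
  {r | ∃ x : Fin q → ℝ, euclNorm x = 1 ∧ r = euclNorm (X.mulVec x)}

lemma supOnSphere_eq {p q : ℕ} (X : Matrix (Fin p) (Fin q) ℝ) :
    supOnSphere X = sSup (sphereVals X) := rfl

lemma infOnSphere_eq {p q : ℕ} (X : Matrix (Fin p) (Fin q) ℝ) :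
    infOnSphere X = sInf (sphereVals X) := rfl

lemma sphereVals_eq_image {p q : ℕ} (X : Matrix (Fin p) (Fin q) ℝ) :
    sphereVals X = (fun y : EuclideanSpace ℝ (Fin q) => ‖Matrix.toEuclideanLin X y‖) ''
      Metric.sphere (0 : EuclideanSpace ℝ (Fin q)) 1 := by
  ext r
  constructor
  · rintro ⟨x, hx, rfl⟩
    refine ⟨(WithLp.equiv 2 (Fin q → ℝ)).symm x, ?_, ?_⟩
    · rw [mem_sphere_zero_iff_norm, ← euclNorm_eq_norm, hx]
    · show ‖Matrix.toEuclideanLin X ((WithLp.equiv 2 (Fin q → ℝ)).symm x)‖ = _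
      rw [Matrix.toEuclideanLin_toLp, euclNorm_eq_norm]; rfl
  · rintro ⟨y, hy, rfl⟩
    refine ⟨(WithLp.equiv 2 (Fin q → ℝ)) y, ?_, ?_⟩
    · rw [euclNorm_eq_norm]; simpa [mem_sphere_zero_iff_norm] using hy
    · show ‖Matrix.toEuclideanLin X y‖ = euclNorm (X.mulVec ((WithLp.equiv 2 (Fin q → ℝ)) y))
      rw [Matrix.toEuclideanLin_apply, euclNorm_eq_norm]; rfl

lemma sphereVals_compact {p q : ℕ} (X : Matrix (Fin p) (Fin q) ℝ) :
    IsCompact (sphereVals X) := by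
  rw [sphereVals_eq_image]
  exact (isCompact_sphere _ _).image
    ((Matrix.toEuclideanLin X).continuous_of_finiteDimensional.norm)

lemma sphereVals_nonempty {p q : ℕ} (hq : 0 < q) (X : Matrix (Fin p) (Fin q) ℝ) :
    (sphereVals X).Nonempty := by
  rw [sphereVals_eq_image]
  obtain ⟨i⟩ := Fin.pos_iff_nonempty.mp hq
  refine Set.Nonempty.image _ ⟨EuclideanSpace.single i (1:ℝ), ?_⟩
  simp [mem_sphere_zero_iff_norm]

lemma sphereVals_mul_orth {p q s : ℕ} (U : Matrix (Fin p) (Fin q) ℝ)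
    (hU : Uᵀ * U = 1) (B : Matrix (Fin q) (Fin s) ℝ) :
    sphereVals (U * B) = sphereVals B := by
  unfold sphereVals
  ext r
  constructor <;> rintro ⟨x, hx, rfl⟩ <;> refine ⟨x, hx, ?_⟩
  · rw [← Matrix.mulVec_mulVec, euclNorm_mulVec_orth U hU]
  · rw [← Matrix.mulVec_mulVec, euclNorm_mulVec_orth U hU]

lemma mem_pos {q : ℕ} {T : Matrix (Fin q) (Fin q) ℝ} (hT : IsUnit T.det)
    {r : ℝ} (hr : r ∈ sphereVals T) : 0 < r := by
  obtain ⟨x, hx, rfl⟩ := hr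
  apply euclNorm_pos
  intro h
  have hx0 : x ≠ 0 := by
    intro h0
    rw [h0] at hx
    simp [euclNorm] at hx
  apply hx0
  have := congrArg (T⁻¹.mulVec) h
  rwa [Matrix.mulVec_mulVec, Matrix.nonsing_inv_mul T hT, Matrix.one_mulVec,
    Matrix.mulVec_zero] at this

lemma inv_mem_inv {q : ℕ} {T : Matrix (Fin q) (Fin q) ℝ} (hT : IsUnit T.det)
    {r : ℝ} (hr : r ∈ sphereVals T) : r⁻¹ ∈ sphereVals T⁻¹ := by
  have hrpos := mem_pos hT hr
  obtain ⟨x, hx, rfl⟩ := hr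
  set r := euclNorm (T.mulVec x) with hrdef
  refine ⟨r⁻¹ • T.mulVec x, ?_, ?_⟩
  · rw [euclNorm_smul, abs_of_pos (by positivity)]
    field_simp
    exact hrdef.symm
  · rw [Matrix.mulVec_smul, Matrix.mulVec_mulVec, Matrix.nonsing_inv_mul T hT,
      Matrix.one_mulVec, euclNorm_smul, abs_of_pos (by positivity), hx, mul_one]

lemma sphereVals_inv {q : ℕ} {T : Matrix (Fin q) (Fin q) ℝ} (hT : IsUnit T.det) :
    sphereVals T⁻¹ = Inv.inv '' sphereVals T := by
  have hTinv : IsUnit T⁻¹.det := by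
    rw [Matrix.det_nonsing_inv]
    exact hT.ringInverse
  ext r
  constructor
  · intro hr
    have h2 := inv_mem_inv hTinv hr
    rw [Matrix.nonsing_inv_nonsing_inv T hT] at h2
    exact ⟨r⁻¹, h2, by rw [inv_inv]⟩
  · rintro ⟨s, hs, rfl⟩
    exact inv_mem_inv hT hs

lemma condNum_inv {q : ℕ} (hq : 0 < q) {T : Matrix (Fin q) (Fin q) ℝ}
    (hT : IsUnit T.det) : condNum T⁻¹ = condNum T := by
  have hcpt := sphereVals_compact T
  have hne := sphereVals_nonempty hq T
  have hgt : IsGreatest (sphereVals T) (sSup (sphereVals T)) :=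
    hcpt.isGreatest_sSup hne
  have hlt : IsLeast (sphereVals T) (sInf (sphereVals T)) :=
    hcpt.isLeast_sInf hne
  set a := sInf (sphereVals T)
  set b := sSup (sphereVals T)
  have ha : 0 < a := mem_pos hT hlt.1
  have hb : 0 < b := mem_pos hT hgt.1
  have hgt' : IsGreatest (sphereVals T⁻¹) a⁻¹ := by
    rw [sphereVals_inv hT]
    constructor
    · exact ⟨a, hlt.1, rfl⟩
    · rintro _ ⟨s, hs, rfl⟩
      exact inv_anti₀ ha (hlt.2 hs)
  have hlt' : IsLeast (sphereVals T⁻¹) b⁻¹ := by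
    rw [sphereVals_inv hT]
    constructor
    · exact ⟨b, hgt.1, rfl⟩
    · rintro _ ⟨s, hs, rfl⟩
      exact inv_anti₀ (mem_pos hT hs) (hgt.2 hs)
  unfold condNum
  rw [supOnSphere_eq, infOnSphere_eq, supOnSphere_eq, infOnSphere_eq,
    hgt'.csSup_eq, hlt'.csInf_eq]
  rw [div_eq_div_iff (by positivity) (by positivity)]
  field_simp
  rfl

lemma condNum_congr {p p' q : ℕ} {X : Matrix (Fin p) (Fin q) ℝ}
    {Y : Matrix (Fin p') (Fin q) ℝ} (h : sphereVals X = sphereVals Y) :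
    condNum X = condNum Y := by
  unfold condNum
  rw [supOnSphere_eq, infOnSphere_eq, supOnSphere_eq, infOnSphere_eq, h]

lemma condNum_zero {p : ℕ} (X : Matrix (Fin p) (Fin 0) ℝ) : condNum X = 0 := by
  have h : sphereVals X = ∅ := by
    ext r
    simp [sphereVals, euclNorm]
  unfold condNum
  rw [supOnSphere_eq, infOnSphere_eq, h, Real.sSup_empty, Real.sInf_empty]
  simp

/-- Let `F` be a real orthogonal `m×m` matrix, `A` a real `m×n` matrix of rank `n`, and
`M = FA` with thin QR factorization `M = QR` (`QᵀQ = Iₙ`, `R` invertible upper triangular).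
Let `S` be a real `k×m` matrix with `rank(SM) = n`, and `SM = Q_s R_s` a thin QR factorization
(`Q_sᵀQ_s = Iₙ`, `R_s` invertible upper triangular). Then `κ(A R_s⁻¹) = κ(S Q)`. -/
theorem condNum_preconditioned_eq_condNum_sampled
    {m n k : ℕ}
    (F : Matrix (Fin m) (Fin m) ℝ) (hF : Fᵀ * F = 1)
    (A : Matrix (Fin m) (Fin n) ℝ) (hA : A.rank = n)
    (Q : Matrix (Fin m) (Fin n) ℝ) (R : Matrix (Fin n) (Fin n) ℝ)
    (hQ : Qᵀ * Q = 1) (hRtri : R.BlockTriangular id) (hRinv : IsUnit R.det)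
    (hQR : F * A = Q * R)
    (S : Matrix (Fin k) (Fin m) ℝ) (hSM : (S * (F * A)).rank = n)
    (Qs : Matrix (Fin k) (Fin n) ℝ) (Rs : Matrix (Fin n) (Fin n) ℝ)
    (hQs : Qsᵀ * Qs = 1) (hRstri : Rs.BlockTriangular id) (hRsinv : IsUnit Rs.det)
    (hQRs : S * (F * A) = Qs * Rs) :
    condNum (A * Rs⁻¹) = condNum (S * Q) := by
  rcases Nat.eq_zero_or_pos n with hn | hn
  · subst hn
    rw [condNum_zero, condNum_zero]
  · have hFFt : F * Fᵀ = 1 := mul_eq_one_comm.mp hF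
    have hAe : A = Fᵀ * (Q * R) := by
      calc A = (Fᵀ * F) * A := by rw [hF, Matrix.one_mul]
        _ = Fᵀ * (F * A) := by rw [Matrix.mul_assoc]
        _ = Fᵀ * (Q * R) := by rw [hQR]
    have keyU : (Fᵀ * Q)ᵀ * (Fᵀ * Q) = 1 := by
      rw [Matrix.transpose_mul, Matrix.transpose_transpose]
      calc Qᵀ * F * (Fᵀ * Q) = Qᵀ * (F * Fᵀ) * Q := by
            simp only [Matrix.mul_assoc]
        _ = Qᵀ * Q := by rw [hFFt, Matrix.mul_one]
        _ = 1 := hQ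
    have h1 : A * Rs⁻¹ = (Fᵀ * Q) * (R * Rs⁻¹) := by
      rw [hAe]; simp only [Matrix.mul_assoc]
    rw [hQR] at hQRs
    have hSQ : S * Q = Qs * (Rs * R⁻¹) := by
      calc S * Q = S * Q * (R * R⁻¹) := by
            rw [Matrix.mul_nonsing_inv R hRinv, Matrix.mul_one]
        _ = (S * (Q * R)) * R⁻¹ := by simp only [Matrix.mul_assoc]
        _ = (Qs * Rs) * R⁻¹ := by rw [hQRs]
        _ = Qs * (Rs * R⁻¹) := by rw [Matrix.mul_assoc]
    have hTdet : IsUnit (R * Rs⁻¹).det := by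
      rw [Matrix.det_mul, Matrix.det_nonsing_inv]
      exact hRinv.mul hRsinv.ringInverse
    have hinv : (R * Rs⁻¹)⁻¹ = Rs * R⁻¹ := by
      rw [Matrix.mul_inv_rev, Matrix.nonsing_inv_nonsing_inv Rs hRsinv]
    calc condNum (A * Rs⁻¹) = condNum (R * Rs⁻¹) := by
          rw [h1]; exact condNum_congr (sphereVals_mul_orth _ keyU _)
      _ = condNum (R * Rs⁻¹)⁻¹ := (condNum_inv hn hTdet).symm
      _ = condNum (Rs * R⁻¹) := by rw [hinv]
      _ = condNum (S * Q) := by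
          rw [hSQ]; exact (condNum_congr (sphereVals_mul_orth _ hQs _)).symm
end

section
/- For every real x with 0 < x < 1, f(−x) ≤ f(x), where f(x) = eˣ·(1+x)^{−(1+x)}; that is, e^{−x}·(1−x)^{−(1−x)} ≤ eˣ·(1+x)^{−(1+x)}, or equivalently (1+x)·ln(1+x) − (1−x)·ln(1−x) ≤ 2x. -/
/-- For every real `0 < x < 1`, `f(−x) ≤ f(x)` where `f(x) = eˣ·(1+x)^{−(1+x)}`, i.e.
`e^{−x}·(1−x)^{−(1−x)} ≤ eˣ·(1+x)^{−(1+x)}`; equivalently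
`(1+x)·ln(1+x) − (1−x)·ln(1−x) ≤ 2x`. -/
theorem f_neg_le_f (x : ℝ) (hx0 : 0 < x) (hx1 : x < 1) :
    Real.exp (-x) * (1 - x) ^ (-(1 - x)) ≤ Real.exp x * (1 + x) ^ (-(1 + x)) ∧
      (1 + x) * Real.log (1 + x) - (1 - x) * Real.log (1 - x) ≤ 2 * x := by
  have h1m : (0:ℝ) < 1 - x := by linarith
  have h1p : (0:ℝ) < 1 + x := by linarith
  set g : ℝ → ℝ := fun t => 2*t - (1+t)*Real.log (1+t) + (1-t)*Real.log (1-t) with hg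
  have hd : ∀ t ∈ Set.Ioo (-1:ℝ) 1,
      HasDerivAt g (-(Real.log (1+t) + Real.log (1-t))) t := by
    intro t ht
    have h1 : (0:ℝ) < 1 + t := by linarith [ht.1]
    have h2 : (0:ℝ) < 1 - t := by linarith [ht.2]
    have d1 : HasDerivAt (fun s : ℝ => Real.log (1+s)) (1/(1+t) * 1) t := by
      exact ((Real.hasDerivAt_log h1.ne').comp t ((hasDerivAt_id t).const_add 1)).congr_deriv (by ring)
    have d2 : HasDerivAt (fun s : ℝ => Real.log (1-s)) (1/(1-t) * (-1)) t := by
      have : HasDerivAt (fun s : ℝ => 1 - s) (-1) t := by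
        simpa using ((hasDerivAt_id t).const_sub 1)
      exact ((Real.hasDerivAt_log h2.ne').comp t this).congr_deriv (by ring)
    have p1 : HasDerivAt (fun s : ℝ => (1+s)*Real.log (1+s))
        (1 * Real.log (1+t) + (1+t) * (1/(1+t) * 1)) t :=
      (((hasDerivAt_id t).const_add 1)).mul d1
    have p2 : HasDerivAt (fun s : ℝ => (1-s)*Real.log (1-s))
        ((-1) * Real.log (1-t) + (1-t) * (1/(1-t) * (-1))) t := by
      have h : HasDerivAt (fun s : ℝ => 1 - s) (-1) t := by
        simpa using ((hasDerivAt_id t).const_sub 1)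
      exact h.mul d2
    have p0 : HasDerivAt (fun s : ℝ => 2*s) 2 t := by
      simpa using (hasDerivAt_id t).const_mul (2:ℝ)
    have := (p0.sub p1).add p2
    refine this.congr_deriv ?_
    field_simp
    ring
  have mono : MonotoneOn g (Set.Icc 0 x) := by
    apply monotoneOn_of_deriv_nonneg (convex_Icc 0 x)
    · intro t ht
      exact (hd t ⟨by linarith [ht.1], by linarith [ht.2]⟩).continuousAt.continuousWithinAt
    · intro t ht
      rw [interior_Icc] at ht
      exact (hd t ⟨by linarith [ht.1], by linarith [ht.2]⟩).differentiableAt.differentiableWithinAt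
    · intro t ht
      rw [interior_Icc] at ht
      have ht' : t ∈ Set.Ioo (-1:ℝ) 1 := ⟨by linarith [ht.1], by linarith [ht.2]⟩
      rw [(hd t ht').deriv]
      have h1 : (0:ℝ) < 1 + t := by linarith [ht'.1]
      have h2 : (0:ℝ) < 1 - t := by linarith [ht'.2]
      have : Real.log (1+t) + Real.log (1-t) = Real.log ((1+t)*(1-t)) :=
        (Real.log_mul h1.ne' h2.ne').symm
      rw [this]
      have : Real.log ((1+t)*(1-t)) ≤ 0 :=
        Real.log_nonpos (by nlinarith) (by nlinarith [sq_nonneg t])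
      linarith
  have hgx : (0:ℝ) ≤ g x := by
    have := mono (Set.left_mem_Icc.2 hx0.le) (Set.right_mem_Icc.2 hx0.le) hx0.le
    simpa [hg] using this
  have key : (1 + x) * Real.log (1 + x) - (1 - x) * Real.log (1 - x) ≤ 2 * x := by
    simp only [hg] at hgx
    linarith
  refine ⟨?_, key⟩
  rw [Real.rpow_def_of_pos h1m, Real.rpow_def_of_pos h1p, ← Real.exp_add, ← Real.exp_add]
  apply Real.exp_le_exp.2
  nlinarith [key]
end

section
/- Let Q be a real m×n matrix with QᵀQ = Iₙ, leverage scores ℓⱼ = ‖eⱼᵀQ‖₂², coherence μ, and L = diag(ℓ₁,…,ℓ_m). Then μ² ≤ ‖QᵀLQ‖₂ ≤ μ. -/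
open Matrix

/-- The spectral (operator two-) norm of a real `p × q` matrix:
`sup_{‖x‖₂=1} ‖A x‖₂`. -/
noncomputable def spectralNorm' {p q : ℕ} (A : Matrix (Fin p) (Fin q) ℝ) : ℝ :=
  sSup {r | ∃ x : Fin q → ℝ, ∑ i, x i ^ 2 = 1 ∧ r = Real.sqrt (∑ j, A.mulVec x j ^ 2)}

/-- If `Q` is a real `m×n` matrix with orthonormal columns, leverage scores
`ℓⱼ = ‖eⱼᵀQ‖₂²`, coherence `μ`, and `L = diag(ℓ₁,…,ℓ_m)`, then `μ² ≤ ‖QᵀLQ‖₂ ≤ μ`. -/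
theorem sq_coherence_le_norm_QtLQ_le_coherence
    {m n : ℕ} (hn : 1 ≤ n) (hnm : n ≤ m)
    (Q : Matrix (Fin m) (Fin n) ℝ) (hQ : Qᵀ * Q = 1)
    (ℓ : Fin m → ℝ) (hℓ : ∀ j, ℓ j = ∑ i, Q j i ^ 2)
    (μ : ℝ) (hμ : IsGreatest (Set.range ℓ) μ) :
    μ ^ 2 ≤ spectralNorm' (Qᵀ * Matrix.diagonal ℓ * Q) ∧
      spectralNorm' (Qᵀ * Matrix.diagonal ℓ * Q) ≤ μ := by
  classical
  set A := Qᵀ * Matrix.diagonal ℓ * Q with hA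
  set S := {r | ∃ x : Fin n → ℝ, ∑ i, x i ^ 2 = 1 ∧
      r = Real.sqrt (∑ j, A.mulVec x j ^ 2)} with hS
  -- basic positivity facts
  have hℓnn : ∀ j, 0 ≤ ℓ j := fun j => (hℓ j) ▸ Finset.sum_nonneg fun i _ => sq_nonneg _
  have hμmem := hμ.1
  have hμub : ∀ j, ℓ j ≤ μ := fun j => hμ.2 ⟨j, rfl⟩
  have hμnn : 0 ≤ μ := by obtain ⟨j, hj⟩ := hμmem; exact hj ▸ hℓnn j
  -- adjoint identity
  have hadj : ∀ (v : Fin n → ℝ) (w : Fin m → ℝ),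
      v ⬝ᵥ (Qᵀ *ᵥ w) = (Q *ᵥ v) ⬝ᵥ w := by
    intro v w
    rw [dotProduct_mulVec, vecMul_transpose]
  -- Q preserves norms
  have hQnorm : ∀ z : Fin n → ℝ, ∑ j, (Q *ᵥ z) j ^ 2 = ∑ i, z i ^ 2 := by
    intro z
    have h1 : ∑ j, (Q *ᵥ z) j ^ 2 = (Q *ᵥ z) ⬝ᵥ (Q *ᵥ z) := by
      simp [dotProduct, pow_two]
    have h2 : (Q *ᵥ z) ⬝ᵥ (Q *ᵥ z) = z ⬝ᵥ z := by
      rw [dotProduct_mulVec, ← mulVec_transpose, mulVec_mulVec, hQ, one_mulVec]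
    rw [h1, h2]
    simp [dotProduct, pow_two]
  -- Qᵀ is a contraction
  have hcontr : ∀ y : Fin m → ℝ, ∑ k, (Qᵀ *ᵥ y) k ^ 2 ≤ ∑ j, y j ^ 2 := by
    intro y
    set z := Qᵀ *ᵥ y with hz
    have hzz : ∑ k, z k ^ 2 = (Q *ᵥ z) ⬝ᵥ y := by
      rw [← hadj z y, ← hz]
      simp [dotProduct, pow_two]
    have hcs : ((Q *ᵥ z) ⬝ᵥ y) ^ 2 ≤ (∑ j, (Q *ᵥ z) j ^ 2) * ∑ j, y j ^ 2 := by
      simpa [dotProduct] using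
        Finset.sum_mul_sq_le_sq_mul_sq Finset.univ (Q *ᵥ z) y
    rw [hQnorm z] at hcs
    rw [← hzz] at hcs
    have hs : 0 ≤ ∑ k, z k ^ 2 := Finset.sum_nonneg fun _ _ => sq_nonneg _
    have ht : 0 ≤ ∑ j, y j ^ 2 := Finset.sum_nonneg fun _ _ => sq_nonneg _
    nlinarith
  -- decomposition of A *ᵥ x
  have hAmul : ∀ x : Fin n → ℝ,
      A *ᵥ x = Qᵀ *ᵥ (fun j => ℓ j * (Q *ᵥ x) j) := by
    intro x
    rw [hA, ← mulVec_mulVec, ← mulVec_mulVec]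
    have hd : diagonal ℓ *ᵥ (Q *ᵥ x) = fun j => ℓ j * (Q *ᵥ x) j := by
      ext j; rw [mulVec_diagonal]
    rw [hd]
  -- upper bound: every element of S is ≤ μ
  have hub : ∀ r ∈ S, r ≤ μ := by
    rintro r ⟨x, hx1, rfl⟩
    have h1 : ∑ j, (A *ᵥ x) j ^ 2 ≤ ∑ j, (ℓ j * (Q *ᵥ x) j) ^ 2 := by
      rw [hAmul x]; exact hcontr _
    have h2 : ∑ j, (ℓ j * (Q *ᵥ x) j) ^ 2 ≤ ∑ j, μ ^ 2 * (Q *ᵥ x) j ^ 2 := by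
      apply Finset.sum_le_sum
      intro j _
      rw [mul_pow]
      have : ℓ j ^ 2 ≤ μ ^ 2 := by
        have := hℓnn j; have := hμub j; nlinarith
      nlinarith [sq_nonneg ((Q *ᵥ x) j)]
    have h3 : ∑ j, μ ^ 2 * (Q *ᵥ x) j ^ 2 = μ ^ 2 := by
      rw [← Finset.mul_sum, hQnorm x, hx1, mul_one]
    have h4 : ∑ j, (A *ᵥ x) j ^ 2 ≤ μ ^ 2 := by linarith
    calc Real.sqrt (∑ j, (A *ᵥ x) j ^ 2) ≤ Real.sqrt (μ ^ 2) :=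
          Real.sqrt_le_sqrt h4
      _ = μ := by rw [Real.sqrt_sq hμnn]
  have hbdd : BddAbove S := ⟨μ, hub⟩
  constructor
  · -- lower bound
    -- μ > 0
    have hsum : ∑ j, ℓ j = (n : ℝ) := by
      have : ∀ j, ℓ j = ∑ i, Q j i ^ 2 := hℓ
      calc ∑ j, ℓ j = ∑ j, ∑ i, Q j i ^ 2 := Finset.sum_congr rfl fun j _ => hℓ j
        _ = ∑ i : Fin n, ∑ j, Q j i ^ 2 := Finset.sum_comm
        _ = ∑ i : Fin n, (Qᵀ * Q) i i := by
            apply Finset.sum_congr rfl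
            intro i _
            simp [Matrix.mul_apply, transpose_apply, pow_two]
        _ = ∑ i : Fin n, (1 : Matrix (Fin n) (Fin n) ℝ) i i := by rw [hQ]
        _ = (n : ℝ) := by simp
    have hμpos : 0 < μ := by
      by_contra h
      push_neg at h
      have hμ0 : μ = 0 := le_antisymm h hμnn
      have : ∀ j, ℓ j = 0 := fun j => le_antisymm (hμ0 ▸ hμub j) (hℓnn j)
      have : ∑ j, ℓ j = 0 := Finset.sum_eq_zero fun j _ => this j
      rw [hsum] at this
      have : (1 : ℝ) ≤ (n : ℝ) := by exact_mod_cast hn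
      linarith
    obtain ⟨j₀, hj₀⟩ := hμmem
    set x : Fin n → ℝ := fun i => Q j₀ i / Real.sqrt μ with hxdef
    have hsqrtμ : Real.sqrt μ ^ 2 = μ := Real.sq_sqrt hμnn
    have hsqrtpos : 0 < Real.sqrt μ := Real.sqrt_pos.mpr hμpos
    have hx1 : ∑ i, x i ^ 2 = 1 := by
      have : ∑ i, x i ^ 2 = (∑ i, Q j₀ i ^ 2) / μ := by
        rw [Finset.sum_div]
        apply Finset.sum_congr rfl
        intro i _
        rw [hxdef]
        rw [div_pow, hsqrtμ]
      rw [this, ← hℓ j₀, hj₀, div_self hμpos.ne']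
    have hw0 : (Q *ᵥ x) j₀ = Real.sqrt μ := by
      have : (Q *ᵥ x) j₀ = (∑ i, Q j₀ i ^ 2) / Real.sqrt μ := by
        simp only [mulVec, dotProduct, hxdef, Finset.sum_div]
        apply Finset.sum_congr rfl
        intro i _
        rw [pow_two]
        ring
      rw [this, ← hℓ j₀, hj₀]
      rw [eq_comm, eq_div_iff hsqrtpos.ne', ← pow_two, hsqrtμ]
    -- quadratic form value
    have hquad : μ ^ 2 ≤ x ⬝ᵥ (A *ᵥ x) := by
      rw [hAmul x, hadj]
      have : (Q *ᵥ x) ⬝ᵥ (fun j => ℓ j * (Q *ᵥ x) j) = ∑ j, ℓ j * (Q *ᵥ x) j ^ 2 := by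
        simp [dotProduct, pow_two]
        apply Finset.sum_congr rfl
        intro j _
        ring
      rw [this]
      have hterm : ℓ j₀ * (Q *ᵥ x) j₀ ^ 2 = μ ^ 2 := by
        rw [hw0, hsqrtμ, hj₀, pow_two]
      calc μ ^ 2 = ℓ j₀ * (Q *ᵥ x) j₀ ^ 2 := hterm.symm
        _ ≤ ∑ j, ℓ j * (Q *ᵥ x) j ^ 2 := by
            apply Finset.single_le_sum (f := fun j => ℓ j * (Q *ᵥ x) j ^ 2)
            · intro j _
              exact mul_nonneg (hℓnn j) (sq_nonneg _)
            · exact Finset.mem_univ j₀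
    -- Cauchy–Schwarz: quadratic form ≤ ‖Ax‖
    have hcs : (x ⬝ᵥ (A *ᵥ x)) ^ 2 ≤ ∑ j, (A *ᵥ x) j ^ 2 := by
      have := Finset.sum_mul_sq_le_sq_mul_sq Finset.univ x (A *ᵥ x)
      rw [hx1, one_mul] at this
      simpa [dotProduct] using this
    have hqnn : 0 ≤ x ⬝ᵥ (A *ᵥ x) := le_trans (sq_nonneg μ) hquad
    have hle : x ⬝ᵥ (A *ᵥ x) ≤ Real.sqrt (∑ j, (A *ᵥ x) j ^ 2) := by
      rw [Real.le_sqrt hqnn (Finset.sum_nonneg fun _ _ => sq_nonneg _)]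
      exact hcs
    have hmem : Real.sqrt (∑ j, (A *ᵥ x) j ^ 2) ∈ S := ⟨x, hx1, rfl⟩
    have : Real.sqrt (∑ j, (A *ᵥ x) j ^ 2) ≤ sSup S := le_csSup hbdd hmem
    calc μ ^ 2 ≤ x ⬝ᵥ (A *ᵥ x) := hquad
      _ ≤ Real.sqrt (∑ j, (A *ᵥ x) j ^ 2) := hle
      _ ≤ sSup S := this
  · exact Real.sSup_le hub hμnn
end

section
/- Let Q be a real m×n matrix with QᵀQ = Iₙ, leverage scores ℓⱼ = ‖eⱼᵀQ‖₂², coherence μ > 0, and L = diag(ℓ₁,…,ℓ_m). Let ℓ_[1] ≥ ℓ_[2] ≥ … ≥ ℓ_[m] denote the leverage scores arranged in non-increasing order, and set t = ⌊1/μ⌋; assume t < m. Then ‖QᵀLQ‖₂ ≤ μ·Σ_{j=1}^{t} ℓ_[j] + (1 − t·μ)·ℓ_[t+1] ≤ μ. If in addition 1/μ is an integer, then ‖QᵀLQ‖₂ ≤ μ·Σ_{j=1}^{t} ℓ_[j]. -/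
open Matrix

lemma sum_ite_const_lt {m : ℕ} (t : ℕ) (h : t ≤ m) (a : ℝ) :
    (∑ j : Fin m, if (j : ℕ) < t then a else 0) = t * a := by
  rw [Fin.sum_univ_eq_sum_range (fun j => if j < t then a else 0) m]
  rw [← Finset.sum_subset (Finset.range_subset_range.2 h)
    (fun x _ hxn => by rw [if_neg (by simpa [Finset.mem_range] using hxn)])]
  rw [Finset.sum_congr rfl (fun x hx => if_pos (Finset.mem_range.1 hx))]
  simp [mul_comm]

lemma key_bound {m : ℕ} (t : ℕ) (htm : t < m) (ℓs : Fin m → ℝ) (hA : Antitone ℓs)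
    (μ c : ℝ) (q : Fin m → ℝ) (hq0 : ∀ j, 0 ≤ q j) (hqc : ∀ j, q j ≤ μ * c)
    (hsum : ∑ j, q j = c) :
    ∑ j, ℓs j * q j ≤
      (μ * (∑ j : Fin m, if (j : ℕ) < t then ℓs j else 0) + (1 - t * μ) * ℓs ⟨t, htm⟩) * c := by
  set a := ℓs ⟨t, htm⟩ with ha
  have h1 : ∀ j : Fin m, (ℓs j - a) * q j ≤ if (j : ℕ) < t then (ℓs j - a) * (μ * c) else 0 := by
    intro j
    by_cases hj : (j : ℕ) < t
    · rw [if_pos hj]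
      have hja : a ≤ ℓs j := hA (show j ≤ ⟨t, htm⟩ from by
        simp only [Fin.le_def]; exact hj.le)
      exact mul_le_mul_of_nonneg_left (hqc j) (by linarith)
    · rw [if_neg hj]
      have hja : ℓs j ≤ a := hA (show (⟨t, htm⟩ : Fin m) ≤ j from by
        simpa [Fin.le_def] using Nat.le_of_not_lt hj)
      exact mul_nonpos_of_nonpos_of_nonneg (by linarith) (hq0 j)
  calc ∑ j, ℓs j * q j = (∑ j, (ℓs j - a) * q j) + a * c := by
        rw [← hsum, Finset.mul_sum, ← Finset.sum_add_distrib]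
        exact Finset.sum_congr rfl (fun j _ => by ring)
    _ ≤ (∑ j : Fin m, if (j : ℕ) < t then (ℓs j - a) * (μ * c) else 0) + a * c :=
        add_le_add_left (Finset.sum_le_sum fun j _ => h1 j) _
    _ = (μ * (∑ j : Fin m, if (j : ℕ) < t then ℓs j else 0) + (1 - t * μ) * a) * c := by
        have h2 : ∀ j : Fin m, (if (j : ℕ) < t then (ℓs j - a) * (μ * c) else 0)
            = (μ * c) * (if (j : ℕ) < t then ℓs j else 0)
              - (if (j : ℕ) < t then a * (μ * c) else 0) := by
          intro j; split_ifs <;> ring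
        rw [Finset.sum_congr rfl (fun j _ => h2 j), Finset.sum_sub_distrib, ← Finset.mul_sum,
          sum_ite_const_lt t htm.le (a * (μ * c))]
        ring

/-- Computable bound on `‖QᵀLQ‖₂` from the largest leverage scores: with the leverage scores
`ℓ_[1] ≥ … ≥ ℓ_[m]` in non-increasing order and `t = ⌊1/μ⌋ < m`,
`‖QᵀLQ‖₂ ≤ μ·Σ_{j=1}^{t} ℓ_[j] + (1 − t·μ)·ℓ_[t+1] ≤ μ`, and if `1/μ` is an integer then
`‖QᵀLQ‖₂ ≤ μ·Σ_{j=1}^{t} ℓ_[j]`. -/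
theorem norm_QtLQ_computable_bound
    {m n : ℕ} (hn : 1 ≤ n) (hnm : n ≤ m)
    (Q : Matrix (Fin m) (Fin n) ℝ) (hQ : Qᵀ * Q = 1)
    (ℓ : Fin m → ℝ) (hℓ : ∀ j, ℓ j = ∑ i, Q j i ^ 2)
    (μ : ℝ) (hμ : IsGreatest (Set.range ℓ) μ) (hμ0 : 0 < μ)
    (ℓs : Fin m → ℝ) (hℓs : Antitone ℓs)
    (hperm : ∃ σ : Equiv.Perm (Fin m), ℓs = ℓ ∘ σ)
    (t : ℕ) (ht : t = Nat.floor (1 / μ)) (htm : t < m) :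
    spectralNorm' (Qᵀ * Matrix.diagonal ℓ * Q) ≤
        μ * (∑ j : Fin m, if (j : ℕ) < t then ℓs j else 0) + (1 - t * μ) * ℓs ⟨t, htm⟩ ∧
      μ * (∑ j : Fin m, if (j : ℕ) < t then ℓs j else 0) + (1 - t * μ) * ℓs ⟨t, htm⟩ ≤ μ ∧
      ((1 / μ : ℝ) = t →
        spectralNorm' (Qᵀ * Matrix.diagonal ℓ * Q) ≤
          μ * (∑ j : Fin m, if (j : ℕ) < t then ℓs j else 0)) := by
  obtain ⟨σ, hσ⟩ := hperm
  have hℓ0 : ∀ j, 0 ≤ ℓ j := fun j => (hℓ j) ▸ Finset.sum_nonneg (fun i _ => sq_nonneg _)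
  have hℓμ : ∀ j, ℓ j ≤ μ := fun j => hμ.2 ⟨j, rfl⟩
  have hℓs0 : ∀ j, 0 ≤ ℓs j := fun j => hσ ▸ hℓ0 (σ j)
  have hℓsμ : ∀ j, ℓs j ≤ μ := fun j => hσ ▸ hℓμ (σ j)
  have htμ : (t : ℝ) * μ ≤ 1 := by
    have h1 : (t : ℝ) ≤ 1 / μ := ht ▸ Nat.floor_le (by positivity)
    calc (t : ℝ) * μ ≤ (1 / μ) * μ := mul_le_mul_of_nonneg_right h1 hμ0.le
      _ = 1 := by field_simp
  have h1tμ : 1 - (t : ℝ) * μ ≤ μ := by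
    have h2 : (1 / μ : ℝ) < t + 1 := ht ▸ Nat.lt_floor_add_one (1 / μ)
    have := mul_lt_mul_of_pos_right h2 hμ0
    rw [one_div, inv_mul_cancel₀ hμ0.ne'] at this
    nlinarith
  set S := ∑ j : Fin m, if (j : ℕ) < t then ℓs j else 0 with hS
  have hS0 : 0 ≤ S := Finset.sum_nonneg fun j _ => by
    split_ifs; exacts [hℓs0 j, le_refl 0]
  have hSμ : S ≤ t * μ := by
    have : S ≤ ∑ j : Fin m, if (j : ℕ) < t then μ else 0 :=
      Finset.sum_le_sum fun j _ => by split_ifs; exacts [hℓsμ j, le_refl 0]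
    rwa [sum_ite_const_lt t htm.le μ] at this
  set a := ℓs ⟨t, htm⟩ with ha
  set B := μ * S + (1 - t * μ) * a with hB
  have hB0 : 0 ≤ B := by
    have := hℓs0 ⟨t, htm⟩
    have h3 : 0 ≤ 1 - (t : ℝ) * μ := by linarith
    positivity
  -- quadratic form identity
  have hbil : ∀ u : Fin n → ℝ, ∀ v : Fin n → ℝ,
      u ⬝ᵥ (Qᵀ * Matrix.diagonal ℓ * Q).mulVec v
        = ∑ j, ℓ j * (Q.mulVec u j * Q.mulVec v j) := by
    intro u v
    rw [← Matrix.mulVec_mulVec, ← Matrix.mulVec_mulVec, Matrix.dotProduct_mulVec,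
      Matrix.vecMul_transpose]
    simp only [dotProduct, Matrix.mulVec_diagonal]
    exact Finset.sum_congr rfl fun j _ => by ring
  -- norm preservation
  have hnormQz : ∀ z : Fin n → ℝ, ∑ j, (Q.mulVec z j) ^ 2 = ∑ i, z i ^ 2 := by
    intro z
    have h4 : Q.mulVec z ⬝ᵥ Q.mulVec z = z ⬝ᵥ z := by
      rw [Matrix.dotProduct_mulVec, ← Matrix.mulVec_transpose, Matrix.mulVec_mulVec, hQ,
        Matrix.one_mulVec]
    simpa [dotProduct, sq] using h4
  -- Cauchy-Schwarz rowwise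
  have hCS : ∀ z : Fin n → ℝ, ∀ j, (Q.mulVec z j) ^ 2 ≤ ℓ j * ∑ i, z i ^ 2 := by
    intro z j
    have := Finset.sum_mul_sq_le_sq_mul_sq Finset.univ (fun i => Q j i) z
    simpa [Matrix.mulVec, dotProduct, hℓ j] using this
  -- quadratic form bound
  have hquad : ∀ z : Fin n → ℝ,
      (∑ j, ℓ j * (Q.mulVec z j * Q.mulVec z j)) ≤ B * ∑ i, z i ^ 2 := by
    intro z
    set c := ∑ i, z i ^ 2 with hc
    have hc0 : 0 ≤ c := Finset.sum_nonneg fun i _ => sq_nonneg _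
    have hkey := key_bound t htm ℓs hℓs μ c (fun j => (Q.mulVec z (σ j)) ^ 2)
      (fun j => sq_nonneg _)
      (fun j => le_trans (hCS z (σ j)) (mul_le_mul_of_nonneg_right (hℓμ (σ j)) hc0))
      (by rw [Equiv.sum_comp σ (fun j => (Q.mulVec z j) ^ 2)]; exact hnormQz z)
    have hre : ∑ j, ℓ j * (Q.mulVec z j * Q.mulVec z j)
        = ∑ j, ℓs j * (Q.mulVec z (σ j)) ^ 2 := by
      rw [← Equiv.sum_comp σ (fun j => ℓ j * (Q.mulVec z j * Q.mulVec z j))]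
      exact Finset.sum_congr rfl fun j _ => by rw [hσ]; simp [sq]
    rw [hre]
    calc ∑ j, ℓs j * (Q.mulVec z (σ j)) ^ 2 ≤ (μ * S + (1 - t * μ) * a) * c := hkey
      _ = B * c := by rw [hB]
  -- main spectral norm bound
  have hmain : spectralNorm' (Qᵀ * Matrix.diagonal ℓ * Q) ≤ B := by
    apply Real.sSup_le _ hB0
    rintro r ⟨x, hx, rfl⟩
    set A := Qᵀ * Matrix.diagonal ℓ * Q with hAdef
    set w := A.mulVec x with hw
    set s := ∑ j, w j ^ 2 with hs
    have hs0 : 0 ≤ s := Finset.sum_nonneg fun j _ => sq_nonneg _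
    have hsw : s = ∑ j, ℓ j * (Q.mulVec w j * Q.mulVec x j) := by
      rw [← hbil w x, ← hw]
      simp [hs, dotProduct, sq]
    -- Cauchy-Schwarz on bilinear form
    have hCS2 : s ^ 2 ≤ (∑ j, ℓ j * (Q.mulVec w j * Q.mulVec w j))
        * (∑ j, ℓ j * (Q.mulVec x j * Q.mulVec x j)) := by
      have := Finset.sum_mul_sq_le_sq_mul_sq Finset.univ
        (fun j => Real.sqrt (ℓ j) * Q.mulVec w j) (fun j => Real.sqrt (ℓ j) * Q.mulVec x j)
      have e1 : ∀ j : Fin m, (Real.sqrt (ℓ j) * Q.mulVec w j) * (Real.sqrt (ℓ j) * Q.mulVec x j)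
          = ℓ j * (Q.mulVec w j * Q.mulVec x j) := by
        intro j
        have h5 : Real.sqrt (ℓ j) * Real.sqrt (ℓ j) = ℓ j := Real.mul_self_sqrt (hℓ0 j)
        linear_combination (Q.mulVec w j * Q.mulVec x j) * h5
      have e2 : ∀ (z : Fin n → ℝ) (j : Fin m), (Real.sqrt (ℓ j) * Q.mulVec z j) ^ 2
          = ℓ j * (Q.mulVec z j * Q.mulVec z j) := by
        intro z j
        rw [mul_pow, Real.sq_sqrt (hℓ0 j)]
        ring
      rw [Finset.sum_congr rfl (fun j _ => e1 j), Finset.sum_congr rfl (fun j _ => e2 w j),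
        Finset.sum_congr rfl (fun j _ => e2 x j)] at this
      rw [hsw]
      exact this
    have hb1 : (∑ j, ℓ j * (Q.mulVec w j * Q.mulVec w j)) ≤ B * s := by
      have := hquad w
      rwa [← hs] at this
    have hb2 : (∑ j, ℓ j * (Q.mulVec x j * Q.mulVec x j)) ≤ B * 1 := by
      have := hquad x
      rwa [hx] at this
    have hq1 : 0 ≤ ∑ j, ℓ j * (Q.mulVec w j * Q.mulVec w j) :=
      Finset.sum_nonneg fun j _ => mul_nonneg (hℓ0 j) (mul_self_nonneg _)
    have hsB : s ^ 2 ≤ B ^ 2 * s := by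
      calc s ^ 2 ≤ (∑ j, ℓ j * (Q.mulVec w j * Q.mulVec w j))
          * (∑ j, ℓ j * (Q.mulVec x j * Q.mulVec x j)) := hCS2
        _ ≤ (B * s) * (B * 1) := by
            apply mul_le_mul hb1 hb2 _ (by positivity)
            exact Finset.sum_nonneg fun j _ => mul_nonneg (hℓ0 j) (mul_self_nonneg _)
        _ = B ^ 2 * s := by ring
    have hsB2 : s ≤ B ^ 2 := by
      rcases eq_or_lt_of_le hs0 with h | h
      · rw [← h]; positivity
      · have := hsB
        rw [sq] at this
        exact le_of_mul_le_mul_right (by nlinarith) h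
    calc Real.sqrt s ≤ Real.sqrt (B ^ 2) := Real.sqrt_le_sqrt hsB2
      _ = B := Real.sqrt_sq hB0
  refine ⟨hmain, ?_, ?_⟩
  · -- B ≤ μ
    have haμ : a ≤ μ := hℓsμ _
    have ha0 : 0 ≤ a := hℓs0 _
    nlinarith [hSμ, htμ, hμ0.le]
  · intro hint
    have htμ1 : (t : ℝ) * μ = 1 := by
      field_simp at hint
      linarith [hint]
    have : B = μ * S := by rw [hB, htμ1]; ring
    rw [← this]
    exact hmain
end

section
/- Let Z be a real m×n matrix with rank(Z) = n, smallest singular value σ_z = inf_{‖y‖₂=1} ‖Z y‖₂ > 0, and largest squared row norm μ_z = max_{1≤j≤m} ‖eⱼᵀZ‖₂². Let D = diag(d₁,…,d_m) be a non-negative m×m diagonal matrix, and let d_[1] ≥ d_[2] ≥ … ≥ d_[m] ≥ 0 denote its diagonal entries in non-increasing order. Set t = ⌊σ_z²/μ_z⌋ and assume t < m. Then: if ‖Z‖₂² − t·μ_z ≤ μ_z, one has ‖DZ‖₂² ≤ μ_z·Σ_{j=1}^{t} d_[j]² + (‖Z‖₂² − t·μ_z)·d_[t+1]²; and if ‖Z‖₂²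 − t·μ_z > μ_z, one has ‖DZ‖₂² ≤ μ_z·Σ_{j=2}^{t+1} d_[j]² + (‖Z‖₂² − t·μ_z)·d_[1]². -/
open Matrix

lemma sum_ite_const' {m t : ℕ} (h : t ≤ m) (x : ℝ) :
    ∑ j : Fin m, (if (j:ℕ) < t then x else 0) = t * x := by
  rw [Fin.sum_univ_eq_sum_range (fun j => if j < t then x else 0)]
  have : ∀ j ∈ Finset.range m, (if j < t then x else 0) = if j ∈ Finset.range t then x else 0 := by
    intro j hj; simp
  rw [Finset.sum_congr rfl this, Finset.sum_ite_mem,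
    Finset.inter_eq_right.mpr (Finset.range_subset_range.mpr h), Finset.sum_const, Finset.card_range,
    nsmul_eq_mul]

lemma lp_bound {m : ℕ} (t : ℕ) (htm : t < m) (ds b : Fin m → ℝ) (μ S : ℝ)
    (hds : Antitone ds) (hds0 : ∀ j, 0 ≤ ds j)
    (hb0 : ∀ j, 0 ≤ b j) (hbμ : ∀ j, b j ≤ μ) (hbS : ∑ j, b j ≤ S) :
    ∑ j, ds j ^ 2 * b j ≤
      μ * (∑ j : Fin m, if (j:ℕ) < t then ds j ^ 2 else 0) + (S - t*μ) * ds ⟨t, htm⟩ ^ 2 := by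
  set c := ds ⟨t, htm⟩ ^ 2 with hc
  have hc0 : 0 ≤ c := sq_nonneg _
  have h1 : ∑ j, ds j ^ 2 * b j = (∑ j, ((ds j ^2 - c) * b j)) + c * ∑ j, b j := by
    rw [Finset.mul_sum, ← Finset.sum_add_distrib]
    exact Finset.sum_congr rfl fun j _ => by ring
  have h2 : ∀ j : Fin m, (ds j ^ 2 - c) * b j ≤ (if (j:ℕ) < t then (ds j ^2 - c) * μ else 0) := by
    intro j
    by_cases hj : (j:ℕ) < t
    · simp only [if_pos hj]
      have hle : ds ⟨t, htm⟩ ≤ ds j := hds (by simp [Fin.le_def]; omega)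
      have hpos : 0 ≤ ds j ^ 2 - c := by nlinarith [hds0 j, hds0 ⟨t,htm⟩]
      exact mul_le_mul_of_nonneg_left (hbμ j) hpos
    · simp only [if_neg hj]
      have hle : ds j ≤ ds ⟨t, htm⟩ := hds (by simp [Fin.le_def]; omega)
      have hneg : ds j ^2 - c ≤ 0 := by nlinarith [hds0 j]
      exact mul_nonpos_of_nonpos_of_nonneg hneg (hb0 j)
  have e1 : (∑ j : Fin m, if (j:ℕ)<t then (ds j^2-c)*μ else 0)
      = μ*(∑ j : Fin m, if (j:ℕ)<t then ds j^2 else 0) - (∑ j : Fin m, if (j:ℕ)<t then c*μ else 0) := by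
    rw [Finset.mul_sum, ← Finset.sum_sub_distrib]
    refine Finset.sum_congr rfl fun j _ => ?_
    by_cases hj : (j:ℕ) < t <;> simp [hj] <;> ring
  calc ∑ j, ds j^2*b j = (∑ j, ((ds j^2-c)*b j)) + c*∑ j, b j := h1
    _ ≤ (∑ j : Fin m, if (j:ℕ)<t then (ds j^2-c)*μ else 0) + c*S :=
        add_le_add (Finset.sum_le_sum fun j _ => h2 j) (mul_le_mul_of_nonneg_left hbS hc0)
    _ = μ*(∑ j : Fin m, if (j:ℕ)<t then ds j^2 else 0) + (S - t*μ)*c := by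
        rw [e1, sum_ite_const' (le_of_lt htm) (c*μ)]; ring

/-- Two-norm bound for diagonally scaled matrices.  `Z` is a real `m×n` matrix with
`rank(Z) = n`, smallest singular value `σ_z = inf_{‖y‖₂=1} ‖Zy‖₂ > 0`, and largest squared
row norm `μ_z`.  `D = diag(d₁,…,d_m)` is non-negative diagonal with entries sorted
non-increasingly as `d_[1] ≥ … ≥ d_[m] ≥ 0`, and `t = ⌊σ_z²/μ_z⌋ < m`.  Then
if `‖Z‖₂² − t·μ_z ≤ μ_z`,
`‖DZ‖₂² ≤ μ_z·Σ_{j=1}^{t} d_[j]² + (‖Z‖₂² − t·μ_z)·d_[t+1]²`, and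
if `‖Z‖₂² − t·μ_z > μ_z`,
`‖DZ‖₂² ≤ μ_z·Σ_{j=2}^{t+1} d_[j]² + (‖Z‖₂² − t·μ_z)·d_[1]²`. -/
theorem norm_diag_scaled_matrix_bound
    {m n : ℕ} (hn : 1 ≤ n)
    (Z : Matrix (Fin m) (Fin n) ℝ) (hrank : Z.rank = n)
    (σz : ℝ)
    (hσ : σz = sInf {r | ∃ y : Fin n → ℝ, ∑ i, y i ^ 2 = 1 ∧
      r = Real.sqrt (∑ j, Z.mulVec y j ^ 2)})
    (hσ0 : 0 < σz)
    (μz : ℝ) (hμ : IsGreatest (Set.range fun j : Fin m => ∑ i, Z j i ^ 2) μz)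
    (d : Fin m → ℝ) (hd : ∀ j, 0 ≤ d j)
    (ds : Fin m → ℝ) (hds : Antitone ds)
    (hperm : ∃ σ : Equiv.Perm (Fin m), ds = d ∘ σ)
    (t : ℕ) (ht : t = Nat.floor (σz ^ 2 / μz)) (htm : t < m) :
    (spectralNorm' Z ^ 2 - t * μz ≤ μz →
      spectralNorm' (Matrix.diagonal d * Z) ^ 2 ≤
        μz * (∑ j : Fin m, if (j : ℕ) < t then ds j ^ 2 else 0) +
          (spectralNorm' Z ^ 2 - t * μz) * ds ⟨t, htm⟩ ^ 2) ∧
    (μz < spectralNorm' Z ^ 2 - t * μz →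
      spectralNorm' (Matrix.diagonal d * Z) ^ 2 ≤
        μz * (∑ j : Fin m, if 1 ≤ (j : ℕ) ∧ (j : ℕ) ≤ t then ds j ^ 2 else 0) +
          (spectralNorm' Z ^ 2 - t * μz) *
            ds ⟨0, Nat.lt_of_le_of_lt (Nat.zero_le t) htm⟩ ^ 2) := by
  obtain ⟨σ, hσperm⟩ := hperm
  set SZ := {r | ∃ x : Fin n → ℝ, ∑ i, x i ^ 2 = 1 ∧
      r = Real.sqrt (∑ j, Z.mulVec x j ^ 2)} with hSZ
  set N := spectralNorm' Z with hN
  have hNdef : N = sSup SZ := rfl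
  set S := N ^ 2 with hS
  -- unit vector
  set x₀ : Fin n → ℝ := fun i => if i = ⟨0, hn⟩ then 1 else 0 with hx₀def
  have hx₀ : ∑ i, x₀ i ^ 2 = 1 := by
    have h : ∀ i, x₀ i ^ 2 = if i = ⟨0, hn⟩ then (1:ℝ) else 0 := by
      intro i; simp only [hx₀def]; split <;> norm_num
    rw [Finset.sum_congr rfl fun i _ => h i, Finset.sum_ite_eq' Finset.univ]
    simp
  have hμ0 : 0 ≤ μz := by
    obtain ⟨j, hj⟩ := hμ.1
    rw [← hj]; positivity
  -- row bound
  have hrow : ∀ (x : Fin n → ℝ), (∑ i, x i ^ 2 = 1) → ∀ j, Z.mulVec x j ^ 2 ≤ μz := by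
    intro x hx j
    have h1 : Z.mulVec x j = ∑ i, Z j i * x i := by
      simp [Matrix.mulVec, dotProduct]
    have h2 := Finset.sum_mul_sq_le_sq_mul_sq Finset.univ (fun i => Z j i) x
    have h3 : (∑ i, Z j i ^ 2) ≤ μz := hμ.2 ⟨j, rfl⟩
    rw [h1]
    calc (∑ i, Z j i * x i)^2 ≤ (∑ i, Z j i ^2) * ∑ i, x i ^2 := h2
      _ = ∑ i, Z j i ^2 := by rw [hx]; ring
      _ ≤ μz := h3
  have hmemZ : ∀ r ∈ SZ, 0 ≤ r ∧ r ≤ Real.sqrt (m * μz) := by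
    rintro r ⟨x, hx, rfl⟩
    refine ⟨Real.sqrt_nonneg _, Real.sqrt_le_sqrt ?_⟩
    calc ∑ j, Z.mulVec x j ^ 2 ≤ ∑ _j : Fin m, μz :=
          Finset.sum_le_sum fun j _ => hrow x hx j
      _ = m * μz := by rw [Finset.sum_const, Finset.card_univ, Fintype.card_fin, nsmul_eq_mul]
  have hne : SZ.Nonempty := ⟨_, ⟨x₀, hx₀, rfl⟩⟩
  have hbdd : BddAbove SZ := ⟨Real.sqrt (m * μz), fun r hr => (hmemZ r hr).2⟩
  have hbelow : BddBelow SZ := ⟨0, fun r hr => (hmemZ r hr).1⟩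
  -- σz ≤ N
  have hr₀ : Real.sqrt (∑ j, Z.mulVec x₀ j ^ 2) ∈ SZ := ⟨x₀, hx₀, rfl⟩
  have hσleN : σz ≤ N := by
    rw [hσ, hNdef]
    exact le_trans (csInf_le hbelow hr₀) (le_csSup hbdd hr₀)
  have hN0 : 0 ≤ N := le_trans hσ0.le hσleN
  have hσS : σz ^ 2 ≤ S := by
    rw [hS]; exact pow_le_pow_left₀ hσ0.le hσleN 2
  -- μz > 0
  have hμpos : 0 < μz := by
    rcases lt_or_eq_of_le hμ0 with h | h
    · exact h
    · exfalso
      have hall : ∀ j, Z.mulVec x₀ j ^ 2 ≤ 0 := fun j => by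
        have := hrow x₀ hx₀ j; linarith
      have hz : (∑ j, Z.mulVec x₀ j ^ 2) = 0 := le_antisymm
        (Finset.sum_nonpos fun j _ => hall j)
        (Finset.sum_nonneg fun j _ => sq_nonneg _)
      have : σz ≤ 0 := by
        rw [hσ]
        calc sInf SZ ≤ Real.sqrt (∑ j, Z.mulVec x₀ j ^ 2) := csInf_le hbelow hr₀
          _ = 0 := by rw [hz, Real.sqrt_zero]
      linarith
  have htμ : (t:ℝ) * μz ≤ σz ^ 2 := by
    have h1 : (t:ℝ) ≤ σz ^ 2 / μz := by
      rw [ht]; exact_mod_cast Nat.floor_le (div_nonneg (sq_nonneg _) hμpos.le)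
    calc (t:ℝ) * μz ≤ (σz^2/μz) * μz := mul_le_mul_of_nonneg_right h1 hμpos.le
      _ = σz ^ 2 := by field_simp
  have hStμ : 0 ≤ S - t * μz := by linarith
  -- ∑ (Zx)² ≤ S for unit x
  have hsumS : ∀ (x : Fin n → ℝ), (∑ i, x i ^ 2 = 1) → ∑ j, Z.mulVec x j ^ 2 ≤ S := by
    intro x hx
    have hmem : Real.sqrt (∑ j, Z.mulVec x j ^ 2) ∈ SZ := ⟨x, hx, rfl⟩
    have h1 : Real.sqrt (∑ j, Z.mulVec x j ^ 2) ≤ N := le_csSup hbdd hmem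
    have h2 : 0 ≤ ∑ j, Z.mulVec x j ^ 2 := Finset.sum_nonneg fun j _ => sq_nonneg _
    calc ∑ j, Z.mulVec x j ^ 2 = Real.sqrt (∑ j, Z.mulVec x j ^ 2) ^ 2 :=
          (Real.sq_sqrt h2).symm
      _ ≤ N ^ 2 := pow_le_pow_left₀ (Real.sqrt_nonneg _) h1 2
  -- ds nonneg
  have hds0 : ∀ j, 0 ≤ ds j := fun j => by rw [hσperm]; exact hd (σ j)
  -- main bound B1
  set B1 := μz * (∑ j : Fin m, if (j:ℕ) < t then ds j ^ 2 else 0) + (S - t*μz) * ds ⟨t, htm⟩ ^ 2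
    with hB1
  have hB1nonneg : 0 ≤ B1 := by
    have h1 : 0 ≤ ∑ j : Fin m, (if (j:ℕ) < t then ds j ^ 2 else 0) :=
      Finset.sum_nonneg fun j _ => by split <;> positivity
    have := sq_nonneg (ds ⟨t, htm⟩)
    positivity
  -- sum bound for DZ
  have hDZsum : ∀ (x : Fin n → ℝ), (∑ i, x i ^ 2 = 1) →
      ∑ j, (Matrix.diagonal d * Z).mulVec x j ^ 2 ≤ B1 := by
    intro x hx
    have hform : ∀ j, (Matrix.diagonal d * Z).mulVec x j = d j * Z.mulVec x j := by
      intro j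
      rw [← Matrix.mulVec_mulVec]
      simp [Matrix.mulVec_diagonal]
    have heq : ∑ j, (Matrix.diagonal d * Z).mulVec x j ^ 2
        = ∑ j, d j ^ 2 * Z.mulVec x j ^ 2 := by
      exact Finset.sum_congr rfl fun j _ => by rw [hform j]; ring
    set a : Fin m → ℝ := fun j => Z.mulVec x j ^ 2 with ha
    have hperm2 : ∑ j, d j ^ 2 * a j = ∑ j, ds j ^ 2 * (a ∘ σ) j := by
      rw [hσperm]
      exact (Equiv.sum_comp σ (fun j => d j ^ 2 * a j)).symm
    have hb0 : ∀ j, 0 ≤ (a ∘ σ) j := fun j => sq_nonneg _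
    have hbμ : ∀ j, (a ∘ σ) j ≤ μz := fun j => hrow x hx (σ j)
    have hbS : ∑ j, (a ∘ σ) j ≤ S := by
      have hcomp : ∑ j, (a ∘ σ) j = ∑ j, a j := Equiv.sum_comp σ a
      rw [hcomp]
      exact hsumS x hx
    rw [heq, hperm2]
    exact lp_bound t htm ds (a ∘ σ) μz S hds hds0 hb0 hbμ hbS
  -- spectral norm of DZ squared ≤ B1
  set SD := {r | ∃ x : Fin n → ℝ, ∑ i, x i ^ 2 = 1 ∧
      r = Real.sqrt (∑ j, (Matrix.diagonal d * Z).mulVec x j ^ 2)} with hSD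
  have hSDub : ∀ r ∈ SD, r ≤ Real.sqrt B1 := by
    rintro r ⟨x, hx, rfl⟩
    exact Real.sqrt_le_sqrt (hDZsum x hx)
  have hSDne : SD.Nonempty := ⟨_, ⟨x₀, hx₀, rfl⟩⟩
  have hSDbdd : BddAbove SD := ⟨Real.sqrt B1, fun r hr => hSDub r hr⟩
  have hND : spectralNorm' (Matrix.diagonal d * Z) ≤ Real.sqrt B1 := csSup_le hSDne hSDub
  have hND0 : 0 ≤ spectralNorm' (Matrix.diagonal d * Z) := by
    obtain ⟨r, hr⟩ := hSDne
    obtain ⟨x, hx, rfl⟩ := hr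
    exact le_trans (Real.sqrt_nonneg _) (le_csSup hSDbdd ⟨x, hx, rfl⟩)
  have hmain : spectralNorm' (Matrix.diagonal d * Z) ^ 2 ≤ B1 := by
    calc spectralNorm' (Matrix.diagonal d * Z) ^ 2 ≤ Real.sqrt B1 ^ 2 :=
          pow_le_pow_left₀ hND0 hND 2
      _ = B1 := Real.sq_sqrt hB1nonneg
  constructor
  · intro _
    exact hmain
  · intro hcase
    refine le_trans hmain ?_
    -- B1 ≤ B2
    set c0 := ds ⟨0, Nat.lt_of_le_of_lt (Nat.zero_le t) htm⟩ ^ 2 with hc0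
    set ct := ds ⟨t, htm⟩ ^ 2 with hct
    have hsplit : ∀ j : Fin m,
        (if (j:ℕ) < t then ds j ^ 2 else 0) + (if j = (⟨t, htm⟩ : Fin m) then ds j ^ 2 else 0)
        = (if 1 ≤ (j:ℕ) ∧ (j:ℕ) ≤ t then ds j ^ 2 else 0)
          + (if j = (⟨0, Nat.lt_of_le_of_lt (Nat.zero_le t) htm⟩ : Fin m) then ds j ^ 2 else 0) := by
      intro j
      have hjt : (j = (⟨t, htm⟩ : Fin m)) ↔ (j:ℕ) = t := by
        constructor
        · intro h; rw [h]
        · intro h; exact Fin.ext h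
      have hj0 : (j = (⟨0, Nat.lt_of_le_of_lt (Nat.zero_le t) htm⟩ : Fin m)) ↔ (j:ℕ) = 0 := by
        constructor
        · intro h; rw [h]
        · intro h; exact Fin.ext h
      simp only [hjt, hj0]
      split_ifs <;> first | ring1 | (exfalso; omega)
    have hsum : (∑ j : Fin m, if (j:ℕ) < t then ds j ^ 2 else 0) + ct
        = (∑ j : Fin m, if 1 ≤ (j:ℕ) ∧ (j:ℕ) ≤ t then ds j ^ 2 else 0) + c0 := by
      have e1 : ∑ j : Fin m, (if j = (⟨t, htm⟩ : Fin m) then ds j ^ 2 else 0) = ct := by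
        rw [Finset.sum_ite_eq' Finset.univ]; simp [hct]
      have e2 : ∑ j : Fin m,
          (if j = (⟨0, Nat.lt_of_le_of_lt (Nat.zero_le t) htm⟩ : Fin m) then ds j ^ 2 else 0)
          = c0 := by
        rw [Finset.sum_ite_eq' Finset.univ]; simp [hc0]
      calc (∑ j : Fin m, if (j:ℕ) < t then ds j ^ 2 else 0) + ct
          = ∑ j : Fin m, ((if (j:ℕ) < t then ds j ^ 2 else 0)
              + (if j = (⟨t, htm⟩ : Fin m) then ds j ^ 2 else 0)) := by
            rw [Finset.sum_add_distrib, e1]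
        _ = ∑ j : Fin m, ((if 1 ≤ (j:ℕ) ∧ (j:ℕ) ≤ t then ds j ^ 2 else 0)
              + (if j = (⟨0, Nat.lt_of_le_of_lt (Nat.zero_le t) htm⟩ : Fin m) then ds j ^ 2 else 0)) :=
            Finset.sum_congr rfl fun j _ => hsplit j
        _ = (∑ j : Fin m, if 1 ≤ (j:ℕ) ∧ (j:ℕ) ≤ t then ds j ^ 2 else 0) + c0 := by
            rw [Finset.sum_add_distrib, e2]
    have hc0ct : ct ≤ c0 := by
      have h1 : ds ⟨t, htm⟩ ≤ ds ⟨0, Nat.lt_of_le_of_lt (Nat.zero_le t) htm⟩ :=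
        hds (by simp [Fin.le_def])
      have h2 := hds0 (⟨t, htm⟩ : Fin m)
      rw [hct, hc0]
      nlinarith
    nlinarith [hsum, hc0ct, hcase]
end

section
/- Let Z be a real m×n matrix with ZᵀZ = Iₙ and coherence μ_z = max_{1≤j≤m} ‖eⱼᵀZ‖₂² > 0. Let D = diag(d₁,…,d_m) be a non-negative m×m diagonal matrix with diagonal entries arranged in non-increasing order d_[1] ≥ … ≥ d_[m] ≥ 0. Set t = ⌊1/μ_z⌋ and assume t < m. Then ‖DZ‖₂² ≤ μ_z·Σ_{j=1}^{t} d_[j]² + (1 − t·μ_z)·d_[t+1]². -/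
open Matrix Finset

lemma key_ineq {m : ℕ} (μ : ℝ) (hμ0 : 0 < μ) (c w : Fin m → ℝ)
    (hc : ∀ i j : Fin m, i ≤ j → c j ≤ c i)
    (hw0 : ∀ j, 0 ≤ w j) (hwμ : ∀ j, w j ≤ μ)
    (hsum : ∑ j, w j = 1) (t : ℕ) (htm : t < m) :
    ∑ j : Fin m, c j * w j ≤
      μ * (∑ j : Fin m, if (j : ℕ) < t then c j else 0) + (1 - t * μ) * c ⟨t, htm⟩ := by
  set B : ℕ → ℝ := fun j => if j < t then μ else if j = t then 1 - t * μ else 0 with hB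
  set W : ℕ → ℝ := fun j => if h : j < m then w ⟨j, h⟩ else 0 with hW
  set F : ℕ → ℝ := fun j => if h : j < m then c ⟨j, h⟩ else 0 with hF
  have hW0 : ∀ j, 0 ≤ W j := by
    intro j; simp only [hW]; split
    · exact hw0 _
    · exact le_refl 0
  have hWμ : ∀ j, W j ≤ μ := by
    intro j; simp only [hW]; split
    · exact hwμ _
    · exact le_of_lt hμ0
  have hWsum : ∑ i ∈ range m, W i = 1 := by
    rw [← Fin.sum_univ_eq_sum_range]
    simpa only [hW, Fin.is_lt, dif_pos, Fin.eta] using hsum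
  have hBsum_t : ∀ k, k ≤ t → ∑ i ∈ range k, B i = k * μ := by
    intro k hk
    rw [Finset.sum_congr rfl (fun i hi => by
      simp only [hB]; rw [if_pos (lt_of_lt_of_le (mem_range.1 hi) hk)])]
    simp [mul_comm]
  have hBsum_gt : ∀ k, t < k → ∑ i ∈ range k, B i = 1 := by
    intro k hk
    have hsub : range (t + 1) ⊆ range k := range_subset_range.2 hk
    rw [← Finset.sum_subset hsub (fun x _ hx => by
      simp only [hB]
      have h1 : ¬ x < t := by
        intro h; exact hx (mem_range.2 (Nat.lt_succ_of_lt h))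
      have h2 : x ≠ t := by
        intro h; exact hx (mem_range.2 (by omega))
      rw [if_neg h1, if_neg h2])]
    rw [Finset.sum_range_succ, hBsum_t t le_rfl]
    simp [hB]
  have hS : ∀ k, k ≤ m → ∑ i ∈ range k, W i ≤ ∑ i ∈ range k, B i := by
    intro k hk
    rcases le_or_gt k t with hkt | htk
    · rw [hBsum_t k hkt]
      calc ∑ i ∈ range k, W i ≤ ∑ i ∈ range k, μ :=
            Finset.sum_le_sum fun i _ => hWμ i
        _ = k * μ := by simp [mul_comm]
    · rw [hBsum_gt k htk]
      calc ∑ i ∈ range k, W i ≤ ∑ i ∈ range m, W i :=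
            Finset.sum_le_sum_of_subset_of_nonneg (range_subset_range.2 hk)
              (fun i _ _ => hW0 i)
        _ = 1 := hWsum
  have hG0 : ∑ i ∈ range m, (B i - W i) = 0 := by
    rw [Finset.sum_sub_distrib, hWsum, hBsum_gt m htm]; ring
  -- Abel summation
  have habel := Finset.sum_range_by_parts F (fun i => B i - W i) m
  have hmain : 0 ≤ ∑ i ∈ range m, F i * (B i - W i) := by
    simp only [smul_eq_mul] at habel
    rw [habel, hG0, mul_zero, zero_sub, le_neg, neg_zero]
    apply Finset.sum_nonpos
    intro i hi
    have him : i + 1 < m := by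
      have := mem_range.1 hi; omega
    have hFle : F (i + 1) - F i ≤ 0 := by
      have h1 : i < m := by omega
      simp only [hF, dif_pos him, dif_pos h1]
      have := hc ⟨i, h1⟩ ⟨i + 1, him⟩ (by simp [Fin.le_def])
      linarith
    have hSge : 0 ≤ ∑ j ∈ range (i + 1), (B j - W j) := by
      rw [Finset.sum_sub_distrib, sub_nonneg]
      exact hS (i + 1) (by omega)
    exact mul_nonpos_of_nonpos_of_nonneg hFle hSge
  have hconv : ∑ i ∈ range m, F i * (B i - W i)
      = ∑ j : Fin m, c j * (B (j : ℕ) - w j) := by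
    rw [← Fin.sum_univ_eq_sum_range]
    refine Finset.sum_congr rfl fun j _ => ?_
    simp only [hF, hW, dif_pos j.isLt, Fin.eta]
  have hBeval : ∑ j : Fin m, c j * B (j : ℕ)
      = μ * (∑ j : Fin m, if (j : ℕ) < t then c j else 0) + (1 - t * μ) * c ⟨t, htm⟩ := by
    have : ∀ j : Fin m, c j * B (j : ℕ)
        = μ * (if (j : ℕ) < t then c j else 0)
          + (if j = ⟨t, htm⟩ then (1 - t * μ) * c j else 0) := by
      intro j
      by_cases h1 : (j : ℕ) < t
      · have h2 : j ≠ ⟨t, htm⟩ := by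
          intro h; rw [h] at h1; simp at h1
        simp [hB, h1, h2]
        ring
      · by_cases h2 : (j : ℕ) = t
        · have h3 : j = ⟨t, htm⟩ := Fin.ext h2
          simp [hB, h1, h2, h3]
          ring
        · have h3 : j ≠ ⟨t, htm⟩ := by
            intro h; exact h2 (by rw [h])
          simp [hB, h1, h2, h3]
    rw [Finset.sum_congr rfl fun j _ => this j, Finset.sum_add_distrib,
      ← Finset.mul_sum, Finset.sum_ite_eq' Finset.univ (⟨t, htm⟩ : Fin m)]
    simp
  have : ∑ j : Fin m, c j * w j ≤ ∑ j : Fin m, c j * B (j : ℕ) := by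
    have h := hmain
    rw [hconv] at h
    have : ∑ j : Fin m, c j * (B (j : ℕ) - w j)
        = ∑ j : Fin m, c j * B (j : ℕ) - ∑ j : Fin m, c j * w j := by
      rw [← Finset.sum_sub_distrib]
      exact Finset.sum_congr rfl fun j _ => by ring
    linarith [this ▸ h]
  rw [hBeval] at this
  exact this

/-- Two-norm bound for the diagonal scaling of a matrix with orthonormal columns.  If
`ZᵀZ = Iₙ` with coherence `μ_z > 0`, `D = diag(d₁,…,d_m)` is non-negative with entries
sorted non-increasingly `d_[1] ≥ … ≥ d_[m] ≥ 0`, and `t = ⌊1/μ_z⌋ < m`, then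
`‖DZ‖₂² ≤ μ_z·Σ_{j=1}^{t} d_[j]² + (1 − t·μ_z)·d_[t+1]²`. -/
theorem norm_diag_scaled_orthonormal_bound
    {m n : ℕ} (hn : 1 ≤ n)
    (Z : Matrix (Fin m) (Fin n) ℝ) (hZ : Zᵀ * Z = 1)
    (μz : ℝ) (hμ : IsGreatest (Set.range fun j : Fin m => ∑ i, Z j i ^ 2) μz)
    (hμ0 : 0 < μz)
    (d : Fin m → ℝ) (hd : ∀ j, 0 ≤ d j)
    (ds : Fin m → ℝ) (hds : Antitone ds)
    (hperm : ∃ σ : Equiv.Perm (Fin m), ds = d ∘ σ)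
    (t : ℕ) (ht : t = Nat.floor (1 / μz)) (htm : t < m) :
    spectralNorm' (Matrix.diagonal d * Z) ^ 2 ≤
      μz * (∑ j : Fin m, if (j : ℕ) < t then ds j ^ 2 else 0) +
        (1 - t * μz) * ds ⟨t, htm⟩ ^ 2 := by
  obtain ⟨σ, hσ⟩ := hperm
  set RHS : ℝ := μz * (∑ j : Fin m, if (j : ℕ) < t then ds j ^ 2 else 0) +
      (1 - t * μz) * ds ⟨t, htm⟩ ^ 2 with hRHS
  -- basic facts
  have hrow_le : ∀ j : Fin m, ∑ i, Z j i ^ 2 ≤ μz := fun j => hμ.2 ⟨j, rfl⟩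
  have hZZ : ∀ i k : Fin n, ∑ j, Z j i * Z j k = if i = k then 1 else 0 := by
    intro i k
    have h := congrFun (congrFun hZ i) k
    simpa [Matrix.mul_apply, Matrix.one_apply, Matrix.transpose_apply] using h
  have htμ : (t : ℝ) * μz ≤ 1 := by
    have h1 : (t : ℝ) ≤ 1 / μz := by
      rw [ht]
      exact_mod_cast Nat.floor_le (by positivity)
    calc (t : ℝ) * μz ≤ (1 / μz) * μz := by nlinarith
      _ = 1 := by field_simp
  have hds0 : ∀ j, 0 ≤ ds j := by
    intro j; rw [hσ]; exact hd _
  have hRHS0 : 0 ≤ RHS := by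
    have h1 : 0 ≤ ∑ j : Fin m, if (j : ℕ) < t then ds j ^ 2 else 0 :=
      Finset.sum_nonneg fun j _ => by positivity
    have h2 : 0 ≤ (1 - (t:ℝ) * μz) := by linarith
    have := sq_nonneg (ds ⟨t, htm⟩)
    rw [hRHS]; positivity
  -- the key per-vector bound
  have hkey : ∀ x : Fin n → ℝ, ∑ i, x i ^ 2 = 1 →
      ∑ j, (Matrix.diagonal d * Z).mulVec x j ^ 2 ≤ RHS := by
    intro x hx
    set y : Fin m → ℝ := Z.mulVec x with hy
    have hDZ : ∀ j, (Matrix.diagonal d * Z).mulVec x j = d j * y j := by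
      intro j
      rw [← Matrix.mulVec_mulVec, Matrix.mulVec_diagonal]
    have hyj : ∀ j, y j ^ 2 ≤ μz := by
      intro j
      have hcs := Finset.sum_mul_sq_le_sq_mul_sq Finset.univ (fun i => Z j i) x
      calc y j ^ 2 = (∑ i, Z j i * x i) ^ 2 := by
            simp [hy, Matrix.mulVec, dotProduct]
        _ ≤ (∑ i, Z j i ^ 2) * ∑ i, x i ^ 2 := hcs
        _ = ∑ i, Z j i ^ 2 := by rw [hx, mul_one]
        _ ≤ μz := hrow_le j
    have hysum : ∑ j, y j ^ 2 = 1 := by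
      calc ∑ j, y j ^ 2 = ∑ j, ∑ i, ∑ k, (x i * x k) * (Z j i * Z j k) := by
            refine Finset.sum_congr rfl fun j _ => ?_
            simp only [hy, Matrix.mulVec, dotProduct]
            rw [sq, Finset.sum_mul_sum]
            exact Finset.sum_congr rfl fun i _ =>
              Finset.sum_congr rfl fun k _ => by ring
        _ = ∑ i, ∑ k, (x i * x k) * ∑ j, Z j i * Z j k := by
            rw [Finset.sum_comm]
            refine Finset.sum_congr rfl fun i _ => ?_
            rw [Finset.sum_comm]
            exact Finset.sum_congr rfl fun k _ => by rw [Finset.mul_sum]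
        _ = ∑ i, x i ^ 2 := by
            refine Finset.sum_congr rfl fun i _ => ?_
            rw [Finset.sum_congr rfl fun k _ => by rw [hZZ i k]]
            simp [Finset.sum_ite_eq, sq]
        _ = 1 := hx
    have hk := key_ineq μz hμ0 (fun j => ds j ^ 2) (fun j => y (σ j) ^ 2)
      (fun i j hij => pow_le_pow_left₀ (hds0 j) (hds hij) 2)
      (fun j => sq_nonneg _) (fun j => hyj _)
      (by rw [Equiv.sum_comp σ (fun j => y j ^ 2)]; exact hysum) t htm
    calc ∑ j, (Matrix.diagonal d * Z).mulVec x j ^ 2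
        = ∑ j, d j ^ 2 * y j ^ 2 := by
          refine Finset.sum_congr rfl fun j _ => ?_
          rw [hDZ j]; ring
      _ = ∑ j, (fun j => ds j ^ 2) j * (fun j => y (σ j) ^ 2) j := by
          rw [← Equiv.sum_comp σ (fun j => d j ^ 2 * y j ^ 2)]
          refine Finset.sum_congr rfl fun j _ => ?_
          simp [hσ]
      _ ≤ RHS := hk
  -- put things together via sSup
  rw [spectralNorm']
  set S := {r | ∃ x : Fin n → ℝ, ∑ i, x i ^ 2 = 1 ∧
      r = Real.sqrt (∑ j, (Matrix.diagonal d * Z).mulVec x j ^ 2)} with hSdef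
  have hub : ∀ r ∈ S, r ≤ Real.sqrt RHS := by
    rintro r ⟨x, hx, rfl⟩
    exact Real.sqrt_le_sqrt (hkey x hx)
  have hsup_le : sSup S ≤ Real.sqrt RHS :=
    Real.sSup_le hub (Real.sqrt_nonneg _)
  have hsup0 : 0 ≤ sSup S := by
    set x0 : Fin n → ℝ := fun i => if i = ⟨0, hn⟩ then 1 else 0 with hx0
    have hx0s : ∑ i, x0 i ^ 2 = 1 := by
      simp [hx0, ite_pow, Finset.sum_ite_eq']
    have hmem : Real.sqrt (∑ j, (Matrix.diagonal d * Z).mulVec x0 j ^ 2) ∈ S :=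
      ⟨x0, hx0s, rfl⟩
    have hbdd : BddAbove S := ⟨Real.sqrt RHS, hub⟩
    exact le_trans (Real.sqrt_nonneg _) (le_csSup hbdd hmem)
  calc sSup S ^ 2 ≤ Real.sqrt RHS ^ 2 := pow_le_pow_left₀ hsup0 hsup_le 2
    _ = RHS := Real.sq_sqrt hRHS0
end

section
/- Let m ≥ n ≥ 1 be integers, and let ℓ ∈ ℝᵐ be a vector with entries satisfying 0 ≤ ℓⱼ ≤ 1 for all 1 ≤ j ≤ m and Σ_{j=1}^{m} ℓⱼ = n. Then there exists a real m×n matrix Q with orthonormal columns, QᵀQ = Iₙ, whose leverage scores equal the prescribed values: ‖eⱼᵀQ‖₂² = ℓⱼ for all 1 ≤ j ≤ m; in particular its coherence is max_{1≤j≤m} ℓⱼ. -/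
open Matrix

open Finset



lemma complement_step {m k n : ℕ} (hkn : k + n = m) {Q' : Matrix (Fin m) (Fin k) ℝ}
    (hQ' : Q'ᵀ * Q' = 1) :
    ∃ Q : Matrix (Fin m) (Fin n) ℝ, Qᵀ * Q = 1 ∧
      ∀ j, ∑ i, Q j i ^ 2 = 1 - ∑ i, Q' j i ^ 2 := by
  classical
  set E := EuclideanSpace ℝ (Fin m)
  set c : Fin k → E := fun i => WithLp.toLp 2 (fun j => Q' j i : Fin m → ℝ) with hc
  have hinner : ∀ i i' : Fin k, inner ℝ (c i) (c i') = (if i = i' then (1:ℝ) else 0) := by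
    intro i i'
    have := congrFun (congrFun hQ' i) i'
    simp only [Matrix.mul_apply, Matrix.transpose_apply, Matrix.one_apply] at this
    simpa [PiLp.inner_apply, hc, RCLike.inner_apply, mul_comm, E] using this
  set v : Fin k ⊕ Fin n → E := Sum.elim c 0 with hv
  have hcard : Module.finrank ℝ E = Fintype.card (Fin k ⊕ Fin n) := by
    simp [E, hkn]
  have horth : Orthonormal ℝ ((Set.range Sum.inl : Set (Fin k ⊕ Fin n)).restrict v) := by
    rw [orthonormal_iff_ite]
    rintro ⟨x, a, rfl⟩ ⟨y, b, rfl⟩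
    simp only [Set.restrict_apply, hv, Sum.elim_inl]
    change inner ℝ (c a) (c b) = _
    rw [hinner]
    congr 1; exact propext ⟨fun h => by subst h; rfl, fun h => Sum.inl_injective (congrArg Subtype.val h)⟩
  obtain ⟨bb, hbb⟩ := horth.exists_orthonormalBasis_extension_of_card_eq hcard
  have hbl : ∀ i : Fin k, bb (Sum.inl i) = c i := fun i => hbb _ ⟨i, rfl⟩
  refine ⟨Matrix.of fun j i => bb (Sum.inr i) j, ?_, ?_⟩
  · ext i i'
    have := (orthonormal_iff_ite.mp bb.orthonormal) (Sum.inr i) (Sum.inr i')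
    simp only [E, PiLp.inner_apply, RCLike.inner_apply, conj_trivial] at this
    simp only [Matrix.mul_apply, Matrix.transpose_apply, Matrix.one_apply, Matrix.of_apply]
    simpa [mul_comm, Sum.inr.injEq] using this
  · intro j
    simp only [Matrix.of_apply]
    have hpar : ∑ u : Fin k ⊕ Fin n, (bb u j)^2 = 1 := by
      have h1 := bb.sum_inner_mul_inner (EuclideanSpace.single j (1:ℝ))
        (EuclideanSpace.single j (1:ℝ))
      have h2 : ∀ u, (inner ℝ (EuclideanSpace.single j (1:ℝ)) (bb u) : ℝ) = bb u j := by
        intro u; simp [EuclideanSpace.inner_single_left]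
      have h3 : ∀ u, (inner ℝ (bb u) (EuclideanSpace.single j (1:ℝ)) : ℝ) = bb u j := by
        intro u; rw [real_inner_comm]; exact h2 u
      have h4 : (inner ℝ (EuclideanSpace.single j (1:ℝ)) (EuclideanSpace.single j (1:ℝ)) : ℝ) = 1 := by
        simp [EuclideanSpace.inner_single_left]
      calc ∑ u : Fin k ⊕ Fin n, (bb u j)^2
          = ∑ u : Fin k ⊕ Fin n, (inner ℝ (EuclideanSpace.single j (1:ℝ)) (bb u) : ℝ) *
              (inner ℝ (bb u) (EuclideanSpace.single j (1:ℝ)) : ℝ) := by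
            refine Finset.sum_congr rfl fun u _ => ?_; rw [h2, h3]; try ring
        _ = 1 := h1.trans h4
    rw [Fintype.sum_sum_type] at hpar
    have : ∀ i : Fin k, (bb (Sum.inl i) j) = Q' j i := fun i => by rw [hbl i, hc]
    simp only [this] at hpar
    linarith


lemma merge_step {m n : ℕ} (ℓ : Fin (m+1) → ℝ)
    (h0 : ∀ j, 0 ≤ ℓ j) (h1 : ∀ j, ℓ j ≤ 1) (hsum : ∑ j, ℓ j = (n:ℝ))
    (j k : Fin (m+1)) (hjk : j ≠ k) (hjk1 : ℓ j + ℓ k ≤ 1)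
    (IH : ∀ ℓ'' : Fin m → ℝ, (∀ x, 0 ≤ ℓ'' x) → (∀ x, ℓ'' x ≤ 1) → ∑ x, ℓ'' x = (n:ℝ) →
      ∃ Q : Matrix (Fin m) (Fin n) ℝ, Qᵀ * Q = 1 ∧ ∀ x, ∑ i, Q x i ^ 2 = ℓ'' x) :
    ∃ Q : Matrix (Fin (m+1)) (Fin n) ℝ, Qᵀ * Q = 1 ∧ ∀ x, ∑ i, Q x i ^ 2 = ℓ x := by
  classical
  obtain ⟨j', hj'⟩ := Fin.exists_succAbove_eq hjk
  set ℓ'' : Fin m → ℝ := fun x => ℓ (k.succAbove x) + (if x = j' then ℓ k else 0) with hl''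
  have hl''j' : ℓ'' j' = ℓ j + ℓ k := by simp [hl'', hj']
  have hl''o : ∀ x, x ≠ j' → ℓ'' x = ℓ (k.succAbove x) := by
    intro x hx; simp [hl'', hx]
  have h0'' : ∀ x, 0 ≤ ℓ'' x := fun x =>
    add_nonneg (h0 _) (by by_cases hx : x = j' <;> simp [hx, h0 k])
  have h1'' : ∀ x, ℓ'' x ≤ 1 := by
    intro x
    by_cases hx : x = j'
    · rw [hx, hl''j']; exact hjk1
    · rw [hl''o x hx]; exact h1 _
  have hsum'' : ∑ x, ℓ'' x = (n:ℝ) := by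
    have h1' : ∑ x : Fin m, (if x = j' then ℓ k else 0) = ℓ k :=
      Finset.sum_ite_eq' Finset.univ j' (fun _ => ℓ k) |>.trans (by simp)
    have h2' : ∑ x : Fin m, ℓ (k.succAbove x) = (∑ y, ℓ y) - ℓ k := by
      rw [Fin.sum_univ_succAbove ℓ k]; ring
    rw [hl'', Finset.sum_add_distrib, h1', h2', hsum]; ring
  obtain ⟨Q'', hQ''1, hQ''2⟩ := IH ℓ'' h0'' h1'' hsum''
  set t : ℝ := ℓ j + ℓ k with ht
  set a : ℝ := Real.sqrt (ℓ j / t) with ha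
  set b : ℝ := Real.sqrt (ℓ k / t) with hb
  have hQrow0 : t = 0 → ∀ i, Q'' j' i = 0 := by
    intro h0t i
    have hz : ∑ i, Q'' j' i ^ 2 = 0 := by rw [hQ''2 j', hl''j']; exact h0t
    have := (Finset.sum_eq_zero_iff_of_nonneg (fun i _ => sq_nonneg (Q'' j' i))).mp hz
      i (Finset.mem_univ i)
    exact (pow_eq_zero_iff two_ne_zero).mp this
  have htpos : t ≠ 0 → 0 < t := fun h =>
    lt_of_le_of_ne (add_nonneg (h0 j) (h0 k)) (Ne.symm h)
  have ha2 : a ^ 2 * t = ℓ j := by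
    by_cases h0t : t = 0
    · rw [h0t, mul_zero]
      have := h0 j; have := h0 k
      have : ℓ j + ℓ k = 0 := h0t ▸ ht.symm ▸ rfl
      linarith [h0 j, h0 k, (ht ▸ h0t : ℓ j + ℓ k = 0)]
    · rw [ha, Real.sq_sqrt (div_nonneg (h0 j) (htpos h0t).le), div_mul_cancel₀ _ h0t]
  have hb2 : b ^ 2 * t = ℓ k := by
    by_cases h0t : t = 0
    · rw [h0t, mul_zero]
      linarith [h0 j, h0 k, (ht ▸ h0t : ℓ j + ℓ k = 0)]
    · rw [hb, Real.sq_sqrt (div_nonneg (h0 k) (htpos h0t).le), div_mul_cancel₀ _ h0t]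
  have hkey : ∀ i i' : Fin n, (a^2 + b^2) * (Q'' j' i * Q'' j' i') = Q'' j' i * Q'' j' i' := by
    intro i i'
    by_cases h0t : t = 0
    · rw [hQrow0 h0t i]; ring
    · have hab : a^2 + b^2 = 1 := by
        have := ha2; have := hb2
        field_simp at this ⊢
        nlinarith [ha2, hb2, htpos h0t]
      rw [hab, one_mul]
  set Q : Matrix (Fin (m+1)) (Fin n) ℝ :=
    fun y i => Fin.insertNth (α := fun _ : Fin (m+1) => Fin n → ℝ) k (fun i => b * Q'' j' i)
      (fun x i => if x = j' then a * Q'' j' i else Q'' x i) y i with hQ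
  have hQk : ∀ i, Q k i = b * Q'' j' i := by
    intro i; rw [hQ]; simp [Fin.insertNth_apply_same]
  have hQs : ∀ (x : Fin m) i, Q (k.succAbove x) i =
      if x = j' then a * Q'' j' i else Q'' x i := by
    intro x i; rw [hQ]; simp [Fin.insertNth_apply_succAbove]
  refine ⟨Q, ?_, ?_⟩
  · ext i i'
    have hbase := congrFun (congrFun hQ''1 i) i'
    simp only [Matrix.mul_apply, Matrix.transpose_apply] at hbase ⊢
    rw [Fin.sum_univ_succAbove (fun y => Q y i * Q y i') k]
    have hsplit : ∀ x : Fin m, Q (k.succAbove x) i * Q (k.succAbove x) i' =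
        Q'' x i * Q'' x i' + (if x = j' then (a^2 - 1) * (Q'' j' i * Q'' j' i') else 0) := by
      intro x
      rcases eq_or_ne x j' with hx | hx
      · simp only [hQs, hx, if_true]; ring
      · simp only [hQs, hx, if_false]; ring
    rw [Finset.sum_congr rfl (fun x _ => hsplit x), Finset.sum_add_distrib,
      Finset.sum_ite_eq' Finset.univ j' (fun _ => (a^2 - 1) * (Q'' j' i * Q'' j' i'))]
    simp only [Finset.mem_univ, if_true, hQk]
    rw [hbase]
    linarith [hkey i i']
  · intro y
    rcases eq_or_ne y k with rfl | hy
    · have : ∑ i, Q y i ^ 2 = b^2 * ∑ i, Q'' j' i ^ 2 := by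
        rw [Finset.mul_sum]
        exact Finset.sum_congr rfl fun i _ => by rw [hQk i]; ring
      rw [this, hQ''2 j', hl''j']; exact hb2
    · obtain ⟨x, rfl⟩ := Fin.exists_succAbove_eq hy
      by_cases hx : x = j'
      · subst hx
        have : ∑ i, Q (k.succAbove x) i ^ 2 = a^2 * ∑ i, Q'' x i ^ 2 := by
          rw [Finset.mul_sum]
          exact Finset.sum_congr rfl fun i _ => by rw [hQs x i]; simp; ring
        rw [this, hQ''2 x, hl''j', hj']; exact ha2
      · have : ∑ i, Q (k.succAbove x) i ^ 2 = ∑ i, Q'' x i ^ 2 := by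
          exact Finset.sum_congr rfl fun i _ => by rw [hQs x i]; simp [hx]
        rw [this, hQ''2 x, hl''o x hx]


lemma all_one_of_sum_eq_card {m : ℕ} (ℓ : Fin m → ℝ) (h1 : ∀ j, ℓ j ≤ 1)
    (hsum : ∑ j, ℓ j = (m : ℝ)) : ∀ j, ℓ j = 1 := by
  intro j
  by_contra h
  have hlt : ℓ j < 1 := lt_of_le_of_ne (h1 j) h
  have : ∑ j, ℓ j < ∑ _j : Fin m, (1:ℝ) :=
    Finset.sum_lt_sum (fun i _ => h1 i) ⟨j, Finset.mem_univ j, hlt⟩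
  simp [hsum] at this

lemma key_lemma : ∀ m n : ℕ, 1 ≤ n → n ≤ m → ∀ ℓ : Fin m → ℝ, (∀ j, 0 ≤ ℓ j) →
    (∀ j, ℓ j ≤ 1) → ∑ j, ℓ j = (n:ℝ) →
    ∃ Q : Matrix (Fin m) (Fin n) ℝ, Qᵀ * Q = 1 ∧ ∀ j, ∑ i, Q j i ^ 2 = ℓ j := by
  intro m
  induction m using Nat.strong_induction_on with
  | _ m IH =>
    intro n hn hnm ℓ h0 h1 hsum
    rcases eq_or_lt_of_le hnm with heq | hlt
    · subst heq
      refine ⟨(1 : Matrix (Fin n) (Fin n) ℝ), by simp, ?_⟩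
      intro j
      have hall := all_one_of_sum_eq_card ℓ h1 hsum
      rw [hall j]
      simp [Matrix.one_apply, apply_ite (· ^ 2)]
    · obtain ⟨m', rfl⟩ : ∃ m', m = m' + 1 := ⟨m - 1, by omega⟩
      by_cases hpair : ∃ j k, j ≠ k ∧ ℓ j + ℓ k ≤ 1
      · obtain ⟨j, k, hjk, hjk1⟩ := hpair
        exact merge_step ℓ h0 h1 hsum j k hjk hjk1
          (IH m' (by omega) n hn (by omega))
      · push_neg at hpair
        have hm2 : 1 ≤ m' := by omega
        set ℓ' : Fin (m'+1) → ℝ := fun y => 1 - ℓ y with hl'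
        have hne : (0 : Fin (m'+1)) ≠ 1 := by
          intro h
          have := congrArg Fin.val h
          simp [Fin.val_one', Nat.mod_eq_of_lt (by omega : 1 < m'+1)] at this
        have hsum' : ∑ y, ℓ' y = ((m' + 1 - n : ℕ) : ℝ) := by
          rw [hl']
          rw [Finset.sum_sub_distrib, hsum]
          rw [Nat.cast_sub (by omega)]
          simp
        obtain ⟨Q', hQ'1, hQ'2⟩ := merge_step ℓ'
          (fun y => by simp [hl', h1 y])
          (fun y => by simp [hl', h0 y])
          hsum' 0 1 hne
          (by have := hpair 0 1 hne; simp only [hl']; linarith)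
          (IH m' (by omega) (m'+1-n) (by omega) (by omega))
        obtain ⟨Q, hQ1, hQ2⟩ := complement_step
          (show (m' + 1 - n) + n = m' + 1 by omega) hQ'1
        refine ⟨Q, hQ1, fun y => ?_⟩
        rw [hQ2 y, hQ'2 y]
        simp [hl']

/-- Existence of matrices with prescribed leverage scores: given integers `m ≥ n ≥ 1` and a
vector `ℓ ∈ ℝᵐ` with `0 ≤ ℓⱼ ≤ 1` and `Σⱼ ℓⱼ = n`, there exists a real `m×n` matrix `Q` with
orthonormal columns whose leverage scores (squared row norms) are `ℓⱼ`; in particular its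
coherence is `max_{1≤j≤m} ℓⱼ`. -/
theorem exists_matrix_with_prescribed_leverage_scores
    {m n : ℕ} (hn : 1 ≤ n) (hnm : n ≤ m)
    (ℓ : Fin m → ℝ) (h0 : ∀ j, 0 ≤ ℓ j) (h1 : ∀ j, ℓ j ≤ 1)
    (hsum : ∑ j, ℓ j = (n : ℝ)) :
    ∃ Q : Matrix (Fin m) (Fin n) ℝ, Qᵀ * Q = 1 ∧ ∀ j, ∑ i, Q j i ^ 2 = ℓ j := by
  exact key_lemma m n hn hnm ℓ h0 h1 hsum
end

section
/- Let n ≥ 1 and s ≥ 2 be integers, set m = s·n, and let μ be a real number with n/m ≤ μ ≤ 1. Define φ = √((1−μ)/(m/n − 1)) and let Q be the m×n matrix obtained by stacking s diagonal blocks: the first block is √μ·Iₙ and each of the remaining s−1 blocks is φ·Iₙ. Then Q has orthonormal columns, QᵀQ = Iₙ, and its coherence equals μ: max_{1≤j≤m} ‖eⱼᵀQ‖₂² = μ. -/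
open Matrix

/-- Stacks of diagonal matrices with prescribed coherence.  Let `m = s·n` with `s ≥ 2`,
`n/m ≤ μ ≤ 1`, and `φ = √((1−μ)/(m/n − 1))`.  The `m×n` matrix `Q` obtained by stacking `s`
diagonal blocks — the first `√μ·Iₙ` and the remaining `s−1` blocks `φ·Iₙ` — has orthonormal
columns and coherence `μ` (its largest squared row norm equals `μ`). -/
theorem stacked_diagonal_matrix_coherence
    {n s : ℕ} (hn : 1 ≤ n) (hs : 2 ≤ s) (μ : ℝ)
    (hμ1 : (n : ℝ) / (s * n : ℕ) ≤ μ) (hμ2 : μ ≤ 1)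
    (φ : ℝ) (hφ : φ = Real.sqrt ((1 - μ) / (((s * n : ℕ) : ℝ) / (n : ℝ) - 1)))
    (Q : Matrix (Fin (s * n)) (Fin n) ℝ)
    (hQdef : ∀ j i, Q j i =
      if (j : ℕ) % n = (i : ℕ) then (if (j : ℕ) < n then Real.sqrt μ else φ) else 0) :
    Qᵀ * Q = 1 ∧
      IsGreatest (Set.range fun j : Fin (s * n) => ∑ i, Q j i ^ 2) μ := by
  haveI : NeZero s := ⟨by omega⟩
  have hn' : 0 < n := hn
  have hn0 : (0:ℝ) < n := by positivity
  have hn0' : (n:ℝ) ≠ 0 := ne_of_gt hn0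
  have hs1 : (0:ℝ) < (s:ℝ) - 1 := by
    have : (2:ℝ) ≤ s := by exact_mod_cast hs
    linarith
  have hm : (((s * n : ℕ) : ℝ)) / (n : ℝ) = (s : ℝ) := by
    push_cast; rw [mul_div_assoc, div_self hn0', mul_one]
  have hμ1' : (1:ℝ) / s ≤ μ := by
    have h : (n : ℝ) / ((s * n : ℕ) : ℝ) = 1 / s := by
      push_cast; field_simp
    rwa [h] at hμ1
  have hμ0 : 0 ≤ μ := le_trans (by positivity) hμ1'
  have hφ2 : φ ^ 2 = (1 - μ) / ((s:ℝ) - 1) := by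
    rw [hφ, hm, Real.sq_sqrt (div_nonneg (by linarith) hs1.le)]
  have hφ2le : φ ^ 2 ≤ μ := by
    rw [hφ2, div_le_iff₀ hs1]
    have hs0 : (0:ℝ) < s := by linarith
    have := (div_le_iff₀ hs0).mp hμ1'
    nlinarith
  -- row sums
  have hrow : ∀ j : Fin (s * n), (∑ i, Q j i ^ 2)
      = if (j : ℕ) < n then μ else φ ^ 2 := by
    intro j
    have hk : (j : ℕ) % n < n := Nat.mod_lt _ hn'
    set k : Fin n := ⟨(j : ℕ) % n, hk⟩ with hkdef
    have : ∀ i : Fin n, Q j i ^ 2 =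
        if k = i then (if (j : ℕ) < n then Real.sqrt μ else φ) ^ 2 else 0 := by
      intro i
      rw [hQdef]
      by_cases h : (j : ℕ) % n = (i : ℕ)
      · rw [if_pos h, if_pos (Fin.ext h)]
      · rw [if_neg h, if_neg (fun hh => h (congrArg Fin.val hh))]
        ring
    rw [Finset.sum_congr rfl (fun i _ => this i), Finset.sum_ite_eq _ k]
    rw [if_pos (Finset.mem_univ k)]
    split
    · rw [Real.sq_sqrt hμ0]
    · rfl
  constructor
  · -- QᵀQ = 1
    ext i i'
    have key : (Qᵀ * Q) i i' = ∑ j : Fin (s * n), Q j i * Q j i' := by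
      simp [Matrix.mul_apply, Matrix.transpose_apply]
    rw [key]
    rw [← Fintype.sum_equiv finProdFinEquiv
        (fun p : Fin s × Fin n => Q (finProdFinEquiv p) i * Q (finProdFinEquiv p) i')
        (fun j => Q j i * Q j i') (fun p => rfl)]
    have hval : ∀ (a : Fin s) (b : Fin n) (i0 : Fin n),
        Q (finProdFinEquiv (a, b)) i0
          = if b = i0 then (if a = 0 then Real.sqrt μ else φ) else 0 := by
      intro a b i0
      rw [hQdef]
      have hcoe : ((finProdFinEquiv (a, b) : Fin (s*n)) : ℕ) = (b : ℕ) + n * (a : ℕ) := rfl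
      have hmod : ((b : ℕ) + n * (a : ℕ)) % n = (b : ℕ) := by
        rw [Nat.add_mul_mod_self_left, Nat.mod_eq_of_lt b.isLt]
      have hlt : ((b : ℕ) + n * (a : ℕ) < n) ↔ a = 0 := by
        constructor
        · intro h
          by_contra ha
          have : 1 ≤ (a : ℕ) := Nat.one_le_iff_ne_zero.mpr
            (fun h0 => ha (Fin.ext h0))
          nlinarith [b.isLt]
        · intro h; subst h; simpa using b.isLt
      rw [hcoe, hmod]
      by_cases hb : (b : ℕ) = (i0 : ℕ)
      · rw [if_pos hb, if_pos (Fin.ext hb)]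
        by_cases ha : a = 0
        · rw [if_pos (hlt.mpr ha), if_pos ha]
        · rw [if_neg (fun h => ha (hlt.mp h)), if_neg ha]
      · rw [if_neg hb, if_neg (fun h => hb (congrArg Fin.val h))]
    rw [Fintype.sum_prod_type]
    have hinner : ∀ a : Fin s,
        (∑ b : Fin n, Q (finProdFinEquiv (a, b)) i * Q (finProdFinEquiv (a, b)) i')
          = if i = i' then (if a = 0 then μ else φ ^ 2) else 0 := by
      intro a
      have : ∀ b : Fin n, Q (finProdFinEquiv (a, b)) i * Q (finProdFinEquiv (a, b)) i'
          = if b = i then (if i = i' then (if a = 0 then μ else φ ^ 2) else 0) else 0 := by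
        intro b
        rw [hval, hval]
        by_cases hbi : b = i
        · subst hbi
          by_cases hii : b = i'
          · rw [if_pos rfl, if_pos hii, if_pos rfl, if_pos hii]
            split
            · rw [Real.mul_self_sqrt hμ0]
            · ring
          · rw [if_pos rfl, if_neg hii, if_pos rfl, if_neg hii, mul_zero]
        · rw [if_neg hbi, if_neg hbi, zero_mul]
      rw [Finset.sum_congr rfl (fun b _ => this b), Finset.sum_ite_eq' _ i,
        if_pos (Finset.mem_univ i)]
    rw [Finset.sum_congr rfl (fun a _ => hinner a)]
    by_cases hii : i = i'
    · subst hii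
      have hsplit : ∀ a : Fin s, (if i = i then (if a = 0 then μ else φ ^ 2) else 0)
          = φ ^ 2 + (if a = 0 then μ - φ ^ 2 else 0) := by
        intro a; rw [if_pos rfl]; split <;> ring
      rw [Finset.sum_congr rfl (fun a _ => hsplit a), Finset.sum_add_distrib,
        Finset.sum_const, Finset.sum_ite_eq' _ (0 : Fin s), if_pos (Finset.mem_univ _)]
      have hcard : (Finset.univ : Finset (Fin s)).card = s := Finset.card_fin s
      rw [hcard, nsmul_eq_mul, hφ2, Matrix.one_apply_eq,
        show (s : ℝ) * ((1 - μ) / ((s:ℝ) - 1)) + (μ - (1 - μ) / ((s:ℝ) - 1))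
          = ((s:ℝ) - 1) * ((1 - μ) / ((s:ℝ) - 1)) + μ by ring,
        mul_div_cancel₀ _ hs1.ne']
      ring
    · simp [hii, Matrix.one_apply_ne hii]
  · constructor
    · refine ⟨⟨0, Nat.mul_pos (by omega) hn'⟩, ?_⟩
      simp only [hrow]
      simp [hn']
    · rintro x ⟨j, rfl⟩
      simp only [hrow]
      split
      · exact le_refl μ
      · exact hφ2le
end
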